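/- arXiv:1909.10275 — 6 statements merged into one kernel-verified Lean document; each statement's English description precedes it below -/
import Mathlib

section
/- Let S be an r×r matrix with all eigenvalues having positive real part, L an m×r matrix, and t > 0. Suppose Q is the unique solution of −S* Q − Q S + L* L − e^{−S*t} L* L e^{−St} = 0 and Q is invertible. Define A_r = S + ξ L_T where ξ = [−Q^{-1}L*, Q^{-1}e^{−S*t}L*] and L_T is the (2m)×r matrix stacking L on top of L e^{−St}. Then A_r = −Q^{-1} S* Q; in particular the eigenvalues of A_r are the negatives of the conjugates of the eigenvalues of S. -/
open Matrix NormedSpace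

lemma neg_conjT_spectrum (r : ℕ) (S : Matrix (Fin r) (Fin r) ℂ) :
    spectrum ℂ (-Sᴴ) = (fun z => -(starRingEnd ℂ z)) '' spectrum ℂ S := by
  ext z
  have hbij : ∀ w : ℂ, z = -(starRingEnd ℂ w) ↔ w = -(starRingEnd ℂ z) := by
    intro w
    constructor <;> intro h <;> subst h <;> simp
  simp only [Set.mem_image]
  constructor
  · intro hz
    refine ⟨-(starRingEnd ℂ z), ?_, by simp⟩
    rw [spectrum.mem_iff] at hz ⊢
    contrapose! hz
    have : algebraMap ℂ (Matrix (Fin r) (Fin r) ℂ) z - (-Sᴴ)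
        = -((algebraMap ℂ (Matrix (Fin r) (Fin r) ℂ) (-(starRingEnd ℂ z)) - S)ᴴ) := by
      simp [Algebra.algebraMap_eq_smul_one, conjTranspose_smul, sub_eq_add_neg]
      abel
    rw [this, IsUnit.neg_iff, isUnit_conjTranspose]
    exact hz
  · rintro ⟨w, hw, rfl⟩
    rw [spectrum.mem_iff] at hw ⊢
    contrapose! hw
    have : algebraMap ℂ (Matrix (Fin r) (Fin r) ℂ) w - S
        = -((algebraMap ℂ (Matrix (Fin r) (Fin r) ℂ) (-(starRingEnd ℂ w)) - (-Sᴴ))ᴴ) := by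
      simp [Algebra.algebraMap_eq_smul_one, conjTranspose_smul, sub_eq_add_neg]
      abel
    rw [this, IsUnit.neg_iff, isUnit_conjTranspose]
    exact hw

/-- With `ξ L_T = −Q⁻¹LᴴL + Q⁻¹e^{−Sᴴt}LᴴLe^{−St}`, the matrix
`A_r = S + ξ L_T` equals `−Q⁻¹ Sᴴ Q`; in particular the eigenvalues of `A_r` are the
negatives of the conjugates of the eigenvalues of `S`. -/
theorem tlpork_pole_placement
    (r m : ℕ) (S : Matrix (Fin r) (Fin r) ℂ) (L : Matrix (Fin m) (Fin r) ℂ)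
    (hS : ∀ μ ∈ spectrum ℂ S, 0 < μ.re)
    (t : ℝ) (ht : 0 < t)
    (Q : Matrix (Fin r) (Fin r) ℂ) (hQinv : IsUnit Q)
    (hLyap : -(Sᴴ * Q) - Q * S + Lᴴ * L
        - exp (-(t • Sᴴ)) * Lᴴ * L * exp (-(t • S)) = 0)
    (A_r : Matrix (Fin r) (Fin r) ℂ)
    (hA_r : A_r = S + (-(Q⁻¹ * Lᴴ * L)
        + Q⁻¹ * exp (-(t • Sᴴ)) * Lᴴ * L * exp (-(t • S)))) :
    A_r = -(Q⁻¹ * Sᴴ * Q) ∧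
      spectrum ℂ A_r = (fun z => -(starRingEnd ℂ z)) '' spectrum ℂ S := by
  have hQQ : Q⁻¹ * Q = 1 := nonsing_inv_mul Q (isUnit_iff_isUnit_det Q |>.mp hQinv)
  have key : exp (-(t • Sᴴ)) * Lᴴ * L * exp (-(t • S)) - Lᴴ * L
      = -(Sᴴ * Q) - Q * S := by
    have := hLyap
    linear_combination (norm := abel) -this
  have h1 : A_r = -(Q⁻¹ * Sᴴ * Q) := by
    rw [hA_r]
    have : -(Q⁻¹ * Lᴴ * L) + Q⁻¹ * exp (-(t • Sᴴ)) * Lᴴ * L * exp (-(t • S))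
        = Q⁻¹ * (exp (-(t • Sᴴ)) * Lᴴ * L * exp (-(t • S)) - Lᴴ * L) := by
      rw [Matrix.mul_sub]
      simp only [Matrix.mul_assoc]
      abel
    rw [this, key]
    rw [Matrix.mul_sub, Matrix.mul_neg, ← Matrix.mul_assoc, ← Matrix.mul_assoc, hQQ,
      Matrix.one_mul]
    abel
  refine ⟨h1, ?_⟩
  rw [h1]
  have hu : -(Q⁻¹ * Sᴴ * Q) = (hQinv.unit⁻¹ : (Matrix (Fin r) (Fin r) ℂ)ˣ) * (-Sᴴ)
      * (hQinv.unit : (Matrix (Fin r) (Fin r) ℂ)ˣ) := by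
    have : ((hQinv.unit⁻¹ : (Matrix (Fin r) (Fin r) ℂ)ˣ) : Matrix (Fin r) (Fin r) ℂ)
        = Q⁻¹ := by
      rw [coe_units_inv, hQinv.unit_spec]
    rw [this, hQinv.unit_spec]
    simp [Matrix.mul_assoc]
  rw [hu]
  rw [show ((hQinv.unit⁻¹ : (Matrix (Fin r) (Fin r) ℂ)ˣ) : Matrix (Fin r) (Fin r) ℂ)
      * (-Sᴴ) * (hQinv.unit : (Matrix (Fin r) (Fin r) ℂ)ˣ)
      = ↑hQinv.unit⁻¹ * (-Sᴴ) * ↑hQinv.unit from rfl]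
  rw [spectrum.units_conjugate']
  exact neg_conjT_spectrum r S
end

section
/- Dual version: let S be r×r with eigenvalues in the open right half-plane, B̄ an r×p matrix, t > 0, and P the unique invertible Hermitian solution of −S P − P S* + B̄ B̄* − e^{−St} B̄ B̄* e^{−S*t} = 0. Define A_r = S + B̃ ξ where B̃ = [B̄, e^{−St}B̄] and ξ is the block column [−B̄* P^{-1}; B̄* e^{−S*t} P^{-1}]. Then A_r = −P S* P^{-1}. -/
open Matrix NormedSpace

/-- dual pole placement: With
`B̃ ξ = −B̄B̄*P⁻¹ + e^{−St}B̄B̄*e^{−Sᴴt}P⁻¹`, the matrix `A_r = S + B̃ ξ`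
equals `−P Sᴴ P⁻¹`. -/
theorem otlpork_pole_placement
    (r p : ℕ) (S : Matrix (Fin r) (Fin r) ℂ) (Bbar : Matrix (Fin r) (Fin p) ℂ)
    (hS : ∀ μ ∈ spectrum ℂ S, 0 < μ.re)
    (t : ℝ) (ht : 0 < t)
    (P : Matrix (Fin r) (Fin r) ℂ) (hPinv : IsUnit P) (hPherm : P.IsHermitian)
    (hLyap : -(S * P) - P * Sᴴ + Bbar * Bbarᴴ
        - NormedSpace.exp (-(t • S)) * Bbar * Bbarᴴ * NormedSpace.exp (-(t • Sᴴ)) = 0)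
    (A_r : Matrix (Fin r) (Fin r) ℂ)
    (hA_r : A_r = S + (-(Bbar * Bbarᴴ * P⁻¹)
        + NormedSpace.exp (-(t • S)) * Bbar * Bbarᴴ * NormedSpace.exp (-(t • Sᴴ)) * P⁻¹)) :
    A_r = -(P * Sᴴ * P⁻¹) := by
  have hPP : P * P⁻¹ = 1 :=
    Matrix.mul_nonsing_inv P ((Matrix.isUnit_iff_isUnit_det P).mp hPinv)
  have key : Bbar * Bbarᴴ - NormedSpace.exp (-(t • S)) * Bbar * Bbarᴴ * NormedSpace.exp (-(t • Sᴴ))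
      = S * P + P * Sᴴ := by
    rw [← sub_eq_zero, ← hLyap]
    abel
  rw [hA_r]
  have : -(Bbar * Bbarᴴ * P⁻¹)
      + NormedSpace.exp (-(t • S)) * Bbar * Bbarᴴ * NormedSpace.exp (-(t • Sᴴ)) * P⁻¹
      = -((Bbar * Bbarᴴ - NormedSpace.exp (-(t • S)) * Bbar * Bbarᴴ * NormedSpace.exp (-(t • Sᴴ))) * P⁻¹) := by
    noncomm_ring
  rw [this, key]
  rw [add_mul, neg_add, mul_assoc S P P⁻¹, hPP, mul_one]
  abel
end

section
/- Theorem 1(v) core computation: With A Hurwitz, V_t ∈ ℂ^{n×r}, S_r ∈ ℂ^{r×r}, L_r ∈ ℂ^{m×r}, Q_S invertible solving −S_r*Q_S − Q_S S_r + L_r*L_r − e^{−S_r*t}L_r*L_re^{−S_rt} = 0, define A_r = −Q_S^{-1}S_r*Q_S, B_r = −Q_S^{-1}L_r*, P̂_T = Q_S^{-1}. If A V_t = V_t S_r + B L_r − e^{At} B L_r e^{−S_r t}, then X := V_t P̂_T satisfies A X + X A_r* + B B_r* − e^{At} B B_r* e^{A_r* t} = 0; in particular, by uniqueness, the cross-Gramian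 P̃_T equals V_t Q_S^{-1}. -/
open Matrix MeasureTheory NormedSpace

open Polynomial in
private lemma eval_charpoly_eq {k : ℕ} (M : Matrix (Fin k) (Fin k) ℂ) (μ : ℂ) :
    (M.charpoly).eval μ = (algebraMap ℂ (Matrix (Fin k) (Fin k) ℂ) μ - M).det := by
  rw [Matrix.charpoly, ← Polynomial.coe_evalRingHom, RingHom.map_det]
  congr 1
  ext i j
  by_cases h : i = j <;>
    simp [Matrix.charmatrix_apply, Matrix.algebraMap_matrix_apply, h, Matrix.diagonal_apply]

private lemma root_charpoly_mem_spectrum {k : ℕ} (M : Matrix (Fin k) (Fin k) ℂ) (μ : ℂ)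
    (h : (M.charpoly).eval μ = 0) : μ ∈ spectrum ℂ M := by
  rw [spectrum.mem_iff]
  intro hu
  rw [Matrix.isUnit_iff_isUnit_det, isUnit_iff_ne_zero] at hu
  rw [eval_charpoly_eq] at h
  exact hu h

open Polynomial in
private lemma sylvester_eq_zero {n r : ℕ} (M : Matrix (Fin n) (Fin n) ℂ)
    (N : Matrix (Fin r) (Fin r) ℂ) (D : Matrix (Fin n) (Fin r) ℂ)
    (hMN : ∀ μ ∈ spectrum ℂ N, μ ∉ spectrum ℂ M)
    (hD : M * D = D * N) : D = 0 := by
  have hpow : ∀ k : ℕ, M ^ k * D = D * N ^ k := by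
    intro k
    induction k with
    | zero => simp
    | succ k ih =>
        rw [pow_succ', pow_succ', Matrix.mul_assoc, ih, ← Matrix.mul_assoc, hD,
          Matrix.mul_assoc]
  have haeval : ∀ p : ℂ[X], aeval M p * D = D * aeval N p := by
    intro p
    induction p using Polynomial.induction_on' with
    | add p q hp hq => rw [map_add, map_add, Matrix.add_mul, Matrix.mul_add, hp, hq]
    | monomial k c =>
        rw [aeval_monomial, aeval_monomial, ← Algebra.smul_def, ← Algebra.smul_def,
          Matrix.smul_mul, Matrix.mul_smul, hpow]
  rcases Nat.eq_zero_or_pos n with hn | hn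
  · subst hn
    ext i j
    exact i.elim0
  have h0 : D * aeval N M.charpoly = 0 := by
    rw [← haeval, M.aeval_self_charpoly, Matrix.zero_mul]
  have hunit : IsUnit (aeval N M.charpoly) := by
    by_contra hnu
    have h0mem : (0 : ℂ) ∈ spectrum ℂ (aeval N M.charpoly) := (spectrum.zero_mem_iff ℂ).2 hnu
    rw [spectrum.map_polynomial_aeval_of_degree_pos N M.charpoly
      (by rw [M.charpoly_degree_eq_dim, Fintype.card_fin]; exact_mod_cast hn)] at h0mem
    obtain ⟨μ, hμ, hev⟩ := h0mem
    exact hMN μ hμ (root_charpoly_mem_spectrum M μ hev)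
  obtain ⟨u, hu⟩ := hunit
  have h1 : aeval N M.charpoly * (↑u⁻¹ : Matrix (Fin r) (Fin r) ℂ) = 1 := by
    rw [← hu]; exact u.mul_inv
  calc D = D * (aeval N M.charpoly * (↑u⁻¹ : Matrix (Fin r) (Fin r) ℂ)) := by
          rw [h1, Matrix.mul_one]
    _ = (D * aeval N M.charpoly) * (↑u⁻¹ : Matrix (Fin r) (Fin r) ℂ) := by
          rw [Matrix.mul_assoc]
    _ = 0 := by rw [h0, Matrix.zero_mul]

private lemma mem_spectrum_neg' {k : ℕ} {N : Matrix (Fin k) (Fin k) ℂ} {μ : ℂ}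
    (h : μ ∈ spectrum ℂ (-N)) : -μ ∈ spectrum ℂ N := by
  rw [← spectrum.neg_eq] at h
  exact Set.mem_neg.1 h

private lemma mem_spectrum_conjTranspose' {k : ℕ} {N : Matrix (Fin k) (Fin k) ℂ} {μ : ℂ}
    (h : μ ∈ spectrum ℂ Nᴴ) : (starRingEnd ℂ) μ ∈ spectrum ℂ N := by
  rw [spectrum.mem_iff] at h ⊢
  intro hu
  apply h
  have key : (algebraMap ℂ (Matrix (Fin k) (Fin k) ℂ) ((starRingEnd ℂ) μ) - N)ᴴ
      = algebraMap ℂ (Matrix (Fin k) (Fin k) ℂ) μ - Nᴴ := by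
    ext i j
    by_cases hij : i = j <;>
      simp [Matrix.conjTranspose_apply, Matrix.algebraMap_matrix_apply, hij, eq_comm]
  rw [← key, Matrix.isUnit_iff_isUnit_det, Matrix.det_conjTranspose]
  exact ((Matrix.isUnit_iff_isUnit_det _).1 hu).star

private lemma hasDerivAt_exp_entry {k : ℕ} (M : Matrix (Fin k) (Fin k) ℂ) (τ : ℝ)
    (i j : Fin k) :
    HasDerivAt (fun s : ℝ => NormedSpace.exp (s • M) i j) ((M * NormedSpace.exp (τ • M)) i j) τ := by
  letI : NormedRing (Matrix (Fin k) (Fin k) ℂ) := Matrix.linftyOpNormedRing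
  letI : NormedAlgebra ℝ (Matrix (Fin k) (Fin k) ℂ) := Matrix.linftyOpNormedAlgebra
  letI : NormedAlgebra ℂ (Matrix (Fin k) (Fin k) ℂ) := Matrix.linftyOpNormedAlgebra
  have h : HasDerivAt (fun s : ℝ => NormedSpace.exp (s • M)) (M * NormedSpace.exp (τ • M)) τ :=
    hasDerivAt_exp_smul_const' M τ
  have hφ := (LinearMap.toContinuousLinearMap
    (Matrix.entryLinearMap ℝ ℂ i j)).hasFDerivAt (x := NormedSpace.exp (τ • M))
  have := hφ.comp_hasDerivAt τ h
  simp only [LinearMap.coe_toContinuousLinearMap', Matrix.entryLinearMap_apply] at this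
  exact this

private lemma hasDerivAt_exp_entry' {k : ℕ} (M : Matrix (Fin k) (Fin k) ℂ) (τ : ℝ)
    (i j : Fin k) :
    HasDerivAt (fun s : ℝ => NormedSpace.exp (s • M) i j) ((NormedSpace.exp (τ • M) * M) i j) τ := by
  letI : NormedRing (Matrix (Fin k) (Fin k) ℂ) := Matrix.linftyOpNormedRing
  letI : NormedAlgebra ℝ (Matrix (Fin k) (Fin k) ℂ) := Matrix.linftyOpNormedAlgebra
  letI : NormedAlgebra ℂ (Matrix (Fin k) (Fin k) ℂ) := Matrix.linftyOpNormedAlgebra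
  have h : HasDerivAt (fun s : ℝ => NormedSpace.exp (s • M)) (NormedSpace.exp (τ • M) * M) τ :=
    hasDerivAt_exp_smul_const M τ
  have hφ := (LinearMap.toContinuousLinearMap
    (Matrix.entryLinearMap ℝ ℂ i j)).hasFDerivAt (x := NormedSpace.exp (τ • M))
  have := hφ.comp_hasDerivAt τ h
  simp only [LinearMap.coe_toContinuousLinearMap', Matrix.entryLinearMap_apply] at this
  exact this

private lemma cont_entry_mul {p q s : ℕ} (U : ℝ → Matrix (Fin p) (Fin q) ℂ)
    (V : ℝ → Matrix (Fin q) (Fin s) ℂ)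
    (hU : ∀ i j, Continuous fun τ => U τ i j) (hV : ∀ i j, Continuous fun τ => V τ i j)
    (i : Fin p) (j : Fin s) : Continuous fun τ => (U τ * V τ) i j := by
  simp only [Matrix.mul_apply]
  exact continuous_finset_sum _ fun k _ => (hU i k).mul (hV k j)

/-- Theorem 1(v) core computation: `X = V_t Q_S⁻¹` satisfies the
time-limited cross-Gramian Sylvester equation, and hence by uniqueness the cross
Gramian `P̃_T` equals `V_t Q_S⁻¹`. -/
theorem theorem1_v_cross_gramian
    (n r m : ℕ) (A : Matrix (Fin n) (Fin n) ℂ) (B : Matrix (Fin n) (Fin m) ℂ)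
    (hA : ∀ μ ∈ spectrum ℂ A, μ.re < 0)
    (t : ℝ) (ht : 0 < t)
    (S_r : Matrix (Fin r) (Fin r) ℂ) (L_r : Matrix (Fin m) (Fin r) ℂ)
    (hS : ∀ μ ∈ spectrum ℂ S_r, 0 < μ.re)
    (Q_S : Matrix (Fin r) (Fin r) ℂ) (hQinv : IsUnit Q_S)
    (hLyap : -(S_rᴴ * Q_S) - Q_S * S_r + L_rᴴ * L_r
        - NormedSpace.exp (-(t • S_rᴴ)) * L_rᴴ * L_r * NormedSpace.exp (-(t • S_r)) = 0)
    (A_r : Matrix (Fin r) (Fin r) ℂ) (B_r : Matrix (Fin r) (Fin m) ℂ)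
    (hA_r : A_r = -(Q_S⁻¹ * S_rᴴ * Q_S)) (hB_r : B_r = -(Q_S⁻¹ * L_rᴴ))
    (hA_rHur : ∀ μ ∈ spectrum ℂ A_r, μ.re < 0)
    (V_t : Matrix (Fin n) (Fin r) ℂ)
    (hVt : A * V_t = V_t * S_r + B * L_r - NormedSpace.exp (t • A) * B * L_r * NormedSpace.exp (-(t • S_r)))
    (Ptilde : Matrix (Fin n) (Fin r) ℂ)
    (hPtilde : Ptilde = Matrix.of fun i j =>
      ∫ τ in (0:ℝ)..t, (NormedSpace.exp (τ • A) * B * B_rᴴ * NormedSpace.exp (τ • A_rᴴ)) i j) :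
    (A * (V_t * Q_S⁻¹) + (V_t * Q_S⁻¹) * A_rᴴ + B * B_rᴴ
        - NormedSpace.exp (t • A) * B * B_rᴴ * NormedSpace.exp (t • A_rᴴ) = 0) ∧
      Ptilde = V_t * Q_S⁻¹ := by
  have hdet : IsUnit Q_S.det := (Matrix.isUnit_iff_isUnit_det _).1 hQinv
  have hQP : Q_S * Q_S⁻¹ = 1 := Matrix.mul_nonsing_inv _ hdet
  have hPQ : Q_S⁻¹ * Q_S = 1 := Matrix.nonsing_inv_mul _ hdet
  have hPQ' : ∀ {p : ℕ} (X : Matrix (Fin r) (Fin p) ℂ), Q_S⁻¹ * (Q_S * X) = X := by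
    intro p X; rw [← Matrix.mul_assoc, hPQ, Matrix.one_mul]
  -- conjugate-transposes of the exponentials
  have hsmulH : ∀ (N : Matrix (Fin r) (Fin r) ℂ), (-(t • N))ᴴ = -(t • Nᴴ) := by
    intro N
    rw [Matrix.conjTranspose_neg, Matrix.conjTranspose_smul, star_trivial]
  have hFH : (NormedSpace.exp (-(t • S_r)))ᴴ = NormedSpace.exp (-(t • S_rᴴ)) := by
    rw [← Matrix.exp_conjTranspose, hsmulH]
  have hF'H : (NormedSpace.exp (-(t • S_rᴴ)))ᴴ = NormedSpace.exp (-(t • S_r)) := by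
    rw [← Matrix.exp_conjTranspose, hsmulH, Matrix.conjTranspose_conjTranspose]
  -- Q_S is Hermitian
  have hL1 : S_rᴴ * Q_S + Q_S * S_r
      = L_rᴴ * L_r - NormedSpace.exp (-(t • S_rᴴ)) * L_rᴴ * L_r * NormedSpace.exp (-(t • S_r)) := by
    have h2 : -(S_rᴴ * Q_S + Q_S * S_r
        - (L_rᴴ * L_r - NormedSpace.exp (-(t • S_rᴴ)) * L_rᴴ * L_r * NormedSpace.exp (-(t • S_r)))) = 0 := by
      rw [← hLyap]; abel
    have h3 := neg_eq_zero.1 h2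
    exact sub_eq_zero.1 h3
  have hL2 : S_rᴴ * Q_Sᴴ + Q_Sᴴ * S_r
      = L_rᴴ * L_r - NormedSpace.exp (-(t • S_rᴴ)) * L_rᴴ * L_r * NormedSpace.exp (-(t • S_r)) := by
    have h2 := congrArg Matrix.conjTranspose hL1
    simp only [Matrix.conjTranspose_add, Matrix.conjTranspose_sub, Matrix.conjTranspose_mul,
      Matrix.conjTranspose_conjTranspose, hFH, hF'H] at h2
    simp only [Matrix.mul_assoc]
    rw [← h2]
    abel
  have hQH : Q_Sᴴ = Q_S := by
    have hcomm : S_rᴴ * (Q_Sᴴ - Q_S) = (Q_Sᴴ - Q_S) * (-S_r) := by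
      have h3 : (S_rᴴ * Q_Sᴴ + Q_Sᴴ * S_r) - (S_rᴴ * Q_S + Q_S * S_r) = 0 := by
        rw [hL2, hL1, sub_self]
      rw [Matrix.mul_sub, Matrix.mul_neg, Matrix.sub_mul]
      rw [← sub_eq_zero, ← h3]
      abel
    have hspec : ∀ μ ∈ spectrum ℂ (-S_r), μ ∉ spectrum ℂ S_rᴴ := by
      intro μ h1 h2
      have ha := hS _ (mem_spectrum_neg' h1)
      have hb := hS _ (mem_spectrum_conjTranspose' h2)
      simp only [Complex.neg_re] at ha
      rw [Complex.conj_re] at hb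
      linarith
    have := sylvester_eq_zero S_rᴴ (-S_r) (Q_Sᴴ - Q_S) hspec hcomm
    rw [sub_eq_zero] at this
    exact this
  have hPH : Q_S⁻¹ᴴ = Q_S⁻¹ := by
    rw [Matrix.conjTranspose_nonsing_inv, hQH]
  -- expressions for A_rᴴ, B_rᴴ, exp(t • A_rᴴ)
  have hArH : A_rᴴ = -(Q_S * S_r * Q_S⁻¹) := by
    rw [hA_r]
    simp only [Matrix.conjTranspose_neg, Matrix.conjTranspose_mul,
      Matrix.conjTranspose_conjTranspose, hPH, hQH]
    rw [Matrix.mul_assoc]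
  have hBrH : B_rᴴ = -(L_r * Q_S⁻¹) := by
    rw [hB_r]
    simp only [Matrix.conjTranspose_neg, Matrix.conjTranspose_mul,
      Matrix.conjTranspose_conjTranspose, hPH]
  have htArH : t • A_rᴴ = Q_S * (-(t • S_r)) * Q_S⁻¹ := by
    rw [hArH]
    simp only [smul_neg, Matrix.mul_neg, Matrix.neg_mul, Matrix.mul_smul, Matrix.smul_mul,
      Matrix.mul_assoc]
  have hexpArH : NormedSpace.exp (t • A_rᴴ) = Q_S * NormedSpace.exp (-(t • S_r)) * Q_S⁻¹ := by
    rw [htArH, Matrix.exp_conj Q_S _ hQinv]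
  -- Part 1: the algebraic Sylvester identity
  have part1 : A * (V_t * Q_S⁻¹) + (V_t * Q_S⁻¹) * A_rᴴ + B * B_rᴴ
      - NormedSpace.exp (t • A) * B * B_rᴴ * NormedSpace.exp (t • A_rᴴ) = 0 := by
    rw [hexpArH, hArH, hBrH,
      show A * (V_t * Q_S⁻¹) = (A * V_t) * Q_S⁻¹ from (Matrix.mul_assoc _ _ _).symm, hVt]
    simp only [Matrix.sub_mul, Matrix.add_mul, Matrix.mul_neg, Matrix.neg_mul,
      Matrix.mul_sub, Matrix.mul_add, Matrix.mul_assoc, hPQ']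
    abel
  refine ⟨part1, ?_⟩
  -- Part 2: uniqueness
  set C : Matrix (Fin n) (Fin r) ℂ := B * B_rᴴ with hCdef
  set X : ℝ → Matrix (Fin n) (Fin n) ℂ := fun τ => NormedSpace.exp (τ • A) with hXdef
  set Y : ℝ → Matrix (Fin r) (Fin r) ℂ := fun τ => NormedSpace.exp (τ • A_rᴴ) with hYdef
  set G : ℝ → Matrix (Fin n) (Fin r) ℂ := fun τ => X τ * C * Y τ with hGdef
  have hXc : ∀ i j, Continuous fun τ : ℝ => X τ i j := fun i j =>
    continuous_iff_continuousAt.2 fun τ => (hasDerivAt_exp_entry A τ i j).continuousAt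
  have hYc : ∀ i j, Continuous fun τ : ℝ => Y τ i j := fun i j =>
    continuous_iff_continuousAt.2 fun τ => (hasDerivAt_exp_entry A_rᴴ τ i j).continuousAt
  have hXCc : ∀ i j, Continuous fun τ : ℝ => (X τ * C) i j :=
    cont_entry_mul X (fun _ => C) hXc (fun i j => continuous_const)
  have hGc : ∀ i j, Continuous fun τ : ℝ => G τ i j :=
    cont_entry_mul (fun τ => X τ * C) Y hXCc hYc
  have hAGc : ∀ i j, Continuous fun τ : ℝ => (A * G τ) i j :=
    cont_entry_mul (fun _ => A) G (fun i j => continuous_const) hGc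
  have hGAc : ∀ i j, Continuous fun τ : ℝ => (G τ * A_rᴴ) i j :=
    cont_entry_mul G (fun _ => A_rᴴ) hGc (fun i j => continuous_const)
  -- entrywise derivative of G
  have hGd : ∀ (τ : ℝ) (i : Fin n) (j : Fin r),
      HasDerivAt (fun s : ℝ => G s i j)
        ((A * G τ) i j + (G τ * A_rᴴ) i j) τ := by
    intro τ i j
    have h2 : ∀ l, HasDerivAt (fun s : ℝ => (X s * C) i l) ((A * X τ * C) i l) τ := by
      intro l
      have := HasDerivAt.fun_sum (u := Finset.univ)
        (A := fun k (s : ℝ) => X s i k * C k l)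
        (A' := fun k => (A * X τ) i k * C k l)
        (fun k _ => (hasDerivAt_exp_entry A τ i k).mul_const (C k l))
      simpa only [Matrix.mul_apply] using this
    have h3 : ∀ l, HasDerivAt (fun s : ℝ => (X s * C) i l * Y s l j)
        ((A * X τ * C) i l * Y τ l j + (X τ * C) i l * (Y τ * A_rᴴ) l j) τ :=
      fun l => (h2 l).mul (hasDerivAt_exp_entry' A_rᴴ τ l j)
    have htot := HasDerivAt.fun_sum (u := Finset.univ)
      (A := fun l (s : ℝ) => (X s * C) i l * Y s l j)
      (A' := fun l => (A * X τ * C) i l * Y τ l j + (X τ * C) i l * (Y τ * A_rᴴ) l j)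
      (fun l _ => h3 l)
    have hfun : (fun s : ℝ => G s i j) = fun s : ℝ => ∑ l, (X s * C) i l * Y s l j := by
      funext s
      rw [hGdef]
      exact Matrix.mul_apply
    have hGassoc : A * G τ = A * X τ * C * Y τ := by
      rw [hGdef]; simp only [Matrix.mul_assoc]
    have hGassoc' : G τ * A_rᴴ = X τ * C * (Y τ * A_rᴴ) := by
      rw [hGdef]; simp only [Matrix.mul_assoc]
    have hval : (∑ l, ((A * X τ * C) i l * Y τ l j + (X τ * C) i l * (Y τ * A_rᴴ) l j))
        = (A * G τ) i j + (G τ * A_rᴴ) i j := by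
      rw [Finset.sum_add_distrib, hGassoc, hGassoc', Matrix.mul_apply, Matrix.mul_apply]
    rw [hfun, ← hval]
    exact htot
  -- FTC
  have hint : ∀ (i : Fin n) (j : Fin r),
      (∫ τ in (0:ℝ)..t, ((A * G τ) i j + (G τ * A_rᴴ) i j)) = G t i j - G 0 i j := by
    intro i j
    exact intervalIntegral.integral_eq_sub_of_hasDerivAt
      (fun τ _ => hGd τ i j)
      (((hAGc i j).add (hGAc i j)).intervalIntegrable 0 t)
  have hPt : ∀ (i : Fin n) (j : Fin r), Ptilde i j = ∫ τ in (0:ℝ)..t, G τ i j := by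
    intro i j
    rw [hPtilde]
    simp only [Matrix.of_apply]
    congr 1
    funext τ
    rw [hGdef, hCdef, hXdef, hYdef]
    simp only [Matrix.mul_assoc]
  have hmain : A * Ptilde + Ptilde * A_rᴴ = G t - G 0 := by
    ext i j
    rw [Matrix.add_apply, Matrix.sub_apply, Matrix.mul_apply, Matrix.mul_apply]
    have e1 : (∑ k, A i k * Ptilde k j) = ∫ τ in (0:ℝ)..t, (A * G τ) i j := by
      simp_rw [hPt, ← intervalIntegral.integral_const_mul]
      rw [← intervalIntegral.integral_finset_sum
        (fun k _ => (continuous_const.fun_mul (hGc k j)).intervalIntegrable 0 t)]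
      congr 1
    have e2 : (∑ k, Ptilde i k * A_rᴴ k j) = ∫ τ in (0:ℝ)..t, (G τ * A_rᴴ) i j := by
      simp_rw [hPt, ← intervalIntegral.integral_mul_const]
      rw [← intervalIntegral.integral_finset_sum
        (fun k _ => ((hGc i k).fun_mul continuous_const).intervalIntegrable 0 t)]
      congr 1
    rw [e1, e2, ← intervalIntegral.integral_add
      ((hAGc i j).intervalIntegrable 0 t) ((hGAc i j).intervalIntegrable 0 t),
      hint i j]
  have hG0 : G 0 = C := by
    rw [hGdef]
    simp only [hXdef, hYdef, zero_smul, exp_zero, Matrix.one_mul, Matrix.mul_one]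
  have hGt : NormedSpace.exp (t • A) * B * B_rᴴ * NormedSpace.exp (t • A_rᴴ) = G t := by
    rw [hGdef, hCdef, hXdef, hYdef]
    simp only [Matrix.mul_assoc]
  -- X₀ := V_t * Q_S⁻¹ satisfies the same equation
  have eqX : A * (V_t * Q_S⁻¹) + (V_t * Q_S⁻¹) * A_rᴴ = G t - G 0 := by
    rw [hG0]
    have := part1
    rw [hGt] at this
    rw [← sub_eq_zero, ← this]
    abel
  have h4 : A * (V_t * Q_S⁻¹) + (V_t * Q_S⁻¹) * A_rᴴ = A * Ptilde + Ptilde * A_rᴴ :=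
    eqX.trans hmain.symm
  have hDD : A * (Ptilde - V_t * Q_S⁻¹) = (Ptilde - V_t * Q_S⁻¹) * (-A_rᴴ) := by
    rw [Matrix.mul_sub, Matrix.sub_mul, Matrix.mul_neg, Matrix.mul_neg,
      ← sub_eq_zero, ← sub_eq_zero.2 h4.symm]
    abel
  have hspec2 : ∀ μ ∈ spectrum ℂ (-A_rᴴ), μ ∉ spectrum ℂ A := by
    intro μ h1 h2
    have ha := hA μ h2
    have hb := hA_rHur _ (mem_spectrum_conjTranspose' (mem_spectrum_neg' h1))
    simp only [Complex.conj_re, Complex.neg_re] at hb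
    linarith
  have := sylvester_eq_zero A (-A_rᴴ) (Ptilde - V_t * Q_S⁻¹) hspec2 hDD
  rw [sub_eq_zero] at this
  exact this
end

section
/- If P = Q^{-1} is the time-limited controllability Gramian of (A_r, B_r) and the cross-Gramian satisfies P̃_T = V_t P (established in Theorem 1), then the first-order optimality condition C_r P = C V_t P, i.e., C_r P̂_T = C P̃_T, holds when C_r := C V_t; hence the reduced model (A_r, B_r, C V_t) is time-limited pseudo-optimal: ‖H − Ĥ_r‖²_{H₂,t} = ‖H‖²_{H₂,t} − ‖Ĥ_r‖²_{H₂,t}. -/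
open Matrix MeasureTheory NormedSpace

section TLPORKAux

open Filter Topology

variable {ι κ ρ σ : Type*} [Fintype ι] [DecidableEq ι] [Fintype κ] [DecidableEq κ]
  [Fintype ρ] [DecidableEq ρ] [Fintype σ] [DecidableEq σ]

private lemma tlpork_exp_smul_one (c : ℂ) :
    exp (c • (1 : Matrix ι ι ℂ)) = Complex.exp c • (1 : Matrix ι ι ℂ) := by
  letI : SeminormedRing (Matrix ι ι ℂ) := Matrix.linftyOpSemiNormedRing
  letI : NormedRing (Matrix ι ι ℂ) := Matrix.linftyOpNormedRing
  letI : NormedAlgebra ℂ (Matrix ι ι ℂ) := Matrix.linftyOpNormedAlgebra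
  rw [← Algebra.algebraMap_eq_smul_one]
  erw [← algebraMap_exp_comm]
  rw [Algebra.algebraMap_eq_smul_one, ← Complex.exp_eq_exp_ℂ]

private lemma tlpork_exp_smul_one_add (c : ℂ) (X : Matrix ι ι ℂ) :
    exp (c • 1 + X) = Complex.exp c • exp X := by
  rw [Matrix.exp_add_of_commute (c • 1) X ((Commute.one_left X).smul_left c),
    tlpork_exp_smul_one, smul_mul_assoc, one_mul]

private lemma tlpork_exp_mulVec_eq_sum (X : Matrix ι ι ℂ) (w : ι → ℂ) (l : ℕ)
    (h : ∀ d, l ≤ d → (X ^ d).mulVec w = 0) :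
    (exp X).mulVec w
      = ∑ d ∈ Finset.range l, (Nat.factorial d : ℂ)⁻¹ • (X ^ d).mulVec w := by
  letI : SeminormedRing (Matrix ι ι ℂ) := Matrix.linftyOpSemiNormedRing
  letI : NormedRing (Matrix ι ι ℂ) := Matrix.linftyOpNormedRing
  letI : NormedAlgebra ℂ (Matrix ι ι ℂ) := Matrix.linftyOpNormedAlgebra
  have hs : HasSum (fun d : ℕ => (Nat.factorial d : ℂ)⁻¹ • X ^ d) (exp X) := by
    rw [exp_eq_tsum ℂ]
    exact (expSeries_summable' (𝕂 := ℂ) X).hasSum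
  let Lv : Matrix ι ι ℂ →ₗ[ℂ] (ι → ℂ) :=
    { toFun := fun Y => Y.mulVec w
      map_add' := fun Y Z => Matrix.add_mulVec Y Z w
      map_smul' := fun c Y => Matrix.smul_mulVec c Y w }
  have hLv : Continuous Lv := Lv.continuous_of_finiteDimensional
  have hs2 : HasSum (fun d : ℕ => (Nat.factorial d : ℂ)⁻¹ • (X ^ d).mulVec w)
      ((exp X).mulVec w) := by
    have := hs.map Lv.toAddMonoidHom hLv
    simpa [Lv, Function.comp_def, Matrix.smul_mulVec] using this
  refine hs2.unique (hasSum_sum_of_ne_finset_zero ?_)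
  intro d hd
  rw [h d (by simpa using hd)]
  simp

private lemma tlpork_tendsto_exp_mul_pow (μ : ℂ) (hμ : μ.re < 0) (d : ℕ) :
    Tendsto (fun k : ℕ => Complex.exp ((k : ℂ) * μ) * (k : ℂ) ^ d) atTop (𝓝 0) := by
  rw [tendsto_zero_iff_norm_tendsto_zero]
  have hne : (0:ℝ) < -μ.re := by linarith
  have hg : Tendsto (fun k : ℕ => (-μ.re) * (k : ℝ)) atTop atTop :=
    (tendsto_natCast_atTop_atTop (R := ℝ)).const_mul_atTop hne
  have h1 : Tendsto (fun k : ℕ => ((-μ.re) * (k:ℝ)) ^ d * Real.exp (-((-μ.re) * (k:ℝ))))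
      atTop (𝓝 0) := (Real.tendsto_pow_mul_exp_neg_atTop_nhds_zero d).comp hg
  have h2 := h1.const_mul (((-μ.re) ^ d)⁻¹)
  rw [mul_zero] at h2
  refine h2.congr (fun k => ?_)
  have hx : ‖Complex.exp ((k : ℂ) * μ) * (k : ℂ) ^ d‖ = Real.exp ((k:ℝ) * μ.re) * (k:ℝ)^d := by
    rw [norm_mul, Complex.norm_exp, norm_pow, Complex.norm_natCast]
    simp
  rw [hx, mul_pow]
  have hne' : (-μ.re) ^ d ≠ 0 := pow_ne_zero _ (by linarith)
  field_simp

private lemma tlpork_tendsto_pow_exp_entry (M : Matrix ι ι ℂ)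
    (hM : ∀ μ ∈ spectrum ℂ M, μ.re < 0) (i j : ι) :
    Tendsto (fun k : ℕ => (exp M ^ k) i j) atTop (𝓝 0) := by
  have key : ∀ v : ι → ℂ,
      Tendsto (fun k : ℕ => (exp M ^ k).mulVec v) atTop (𝓝 0) := by
    intro v
    set φ : Module.End ℂ (ι → ℂ) := Matrix.toLinAlgEquiv' M with hφ
    have hv : v ∈ ⨆ μ : ℂ, φ.maxGenEigenspace μ := by
      rw [Module.End.iSup_maxGenEigenspace_eq_top]; trivial
    refine Submodule.iSup_induction (motive := fun w =>
        Tendsto (fun k : ℕ => (exp M ^ k).mulVec w) atTop (𝓝 0)) _ hv ?_ ?_ ?_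
    · -- main case
      intro μ w hw
      by_cases hw0 : w = 0
      · simp [hw0]
      obtain ⟨l, -, hl⟩ := Module.End.mem_genEigenspace.mp hw
      have hl' : ((φ - μ • 1) ^ l) w = 0 := LinearMap.mem_ker.mp hl
      have hl0 : l ≠ 0 := by
        rintro rfl
        simp at hl'
        exact hw0 hl'
      have hμspec : μ ∈ spectrum ℂ M := by
        have hgen : φ.HasGenEigenvalue μ l := by
          rw [Module.End.hasGenEigenvalue_iff]
          exact Submodule.ne_bot_iff _ |>.mpr
            ⟨w, (Module.End.mem_genEigenspace_nat).mpr hl', hw0⟩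
        have := Module.End.hasEigenvalue_iff_mem_spectrum.mp
          (Module.End.hasEigenvalue_of_hasGenEigenvalue hgen)
        rwa [hφ, AlgEquiv.spectrum_eq] at this
      have hμ : μ.re < 0 := hM μ hμspec
      set N : Matrix ι ι ℂ := M - μ • 1 with hN
      have hNl : (N ^ l).mulVec w = 0 := by
        have : Matrix.toLinAlgEquiv' (N ^ l) = (φ - μ • 1) ^ l := by
          rw [map_pow, hφ, hN, map_sub, _root_.map_smul, _root_.map_one]
        calc (N ^ l).mulVec w = (Matrix.toLinAlgEquiv' (N ^ l)) w := by
              rw [Matrix.toLinAlgEquiv'_apply]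
          _ = 0 := by rw [this, hl']
      have hdecomp : ∀ k : ℕ, (exp M ^ k).mulVec w
          = ∑ d ∈ Finset.range l, (Complex.exp ((k:ℂ) * μ) * (k:ℂ) ^ d
              * (Nat.factorial d : ℂ)⁻¹) • (N ^ d).mulVec w := by
        intro k
        have h1 : (k : ℕ) • M = ((k:ℂ) * μ) • (1 : Matrix ι ι ℂ) + (k:ℂ) • N := by
          rw [hN, smul_sub, ← Nat.cast_smul_eq_nsmul (R := ℂ), smul_smul]
          abel
        rw [← Matrix.exp_nsmul, h1, tlpork_exp_smul_one_add, Matrix.smul_mulVec]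
        have hNk : ∀ d, l ≤ d → (((k:ℂ) • N) ^ d).mulVec w = 0 := by
          intro d hd
          have hz : (N ^ d).mulVec w = 0 := by
            rw [show d = (d - l) + l from (Nat.sub_add_cancel hd).symm, pow_add,
              ← Matrix.mulVec_mulVec, hNl, Matrix.mulVec_zero]
          rw [smul_pow, Matrix.smul_mulVec, hz, smul_zero]
        rw [tlpork_exp_mulVec_eq_sum _ _ l hNk, Finset.smul_sum]
        refine Finset.sum_congr rfl fun d _ => ?_
        rw [smul_pow, Matrix.smul_mulVec]
        rw [smul_smul, smul_smul]
        ring_nf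
      have h0 : Tendsto (fun k : ℕ => ∑ d ∈ Finset.range l,
          (Complex.exp ((k:ℂ) * μ) * (k:ℂ) ^ d * (Nat.factorial d : ℂ)⁻¹) • (N ^ d).mulVec w)
          atTop (𝓝 (∑ d ∈ Finset.range l, (0 : ι → ℂ))) := by
        refine tendsto_finset_sum _ fun d _ => ?_
        have := ((tlpork_tendsto_exp_mul_pow μ hμ d).mul_const
          ((Nat.factorial d : ℂ)⁻¹)).smul_const ((N ^ d).mulVec w)
        simpa using this
      have h0' : Tendsto (fun k : ℕ => ∑ d ∈ Finset.range l,
          (Complex.exp ((k:ℂ) * μ) * (k:ℂ) ^ d * (Nat.factorial d : ℂ)⁻¹) • (N ^ d).mulVec w)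
          atTop (𝓝 0) := by simpa using h0
      exact h0'.congr fun k => (hdecomp k).symm
    · simpa using tendsto_const_nhds
    · intro x y hx hy
      have := hx.add hy
      simpa [Matrix.mulVec_add] using this
  have h0 := key (Pi.single j 1)
  have h1 := tendsto_pi_nhds.mp h0 i
  refine h1.congr fun k => ?_
  rw [Matrix.mulVec_single]
  simp

private lemma tlpork_stein_zero (N1 : Matrix ι ι ℂ) (N2 : Matrix κ κ ℂ)
    (h1 : ∀ i j, Tendsto (fun k : ℕ => (N1 ^ k) i j) atTop (𝓝 0))
    (h2 : ∀ i j, Tendsto (fun k : ℕ => (N2 ^ k) i j) atTop (𝓝 0))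
    (X : Matrix ι κ ℂ) (hX : X = N1 * X * N2) : X = 0 := by
  have hk : ∀ k : ℕ, X = N1 ^ k * X * N2 ^ k := by
    intro k
    induction k with
    | zero => simp
    | succ k ih =>
      calc X = N1 * X * N2 := hX
        _ = N1 * (N1 ^ k * X * N2 ^ k) * N2 := by rw [← ih]
        _ = N1 ^ (k + 1) * X * N2 ^ (k + 1) := by
            rw [pow_succ' N1, pow_succ N2]
            simp only [Matrix.mul_assoc]
  ext i j
  have hsum : ∀ k : ℕ, (N1 ^ k * X * N2 ^ k) i j
      = ∑ a, ∑ b, (N1 ^ k) i a * (X a b * (N2 ^ k) b j) := by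
    intro k
    simp only [Matrix.mul_apply, Finset.sum_mul, mul_assoc]
    exact Finset.sum_comm
  have hT : Tendsto (fun k : ℕ => (N1 ^ k * X * N2 ^ k) i j) atTop (𝓝 0) := by
    have : Tendsto (fun k : ℕ => ∑ a, ∑ b, (N1 ^ k) i a * (X a b * (N2 ^ k) b j))
        atTop (𝓝 (∑ a : ι, ∑ b : κ, (0:ℂ))) := by
      refine tendsto_finset_sum _ fun a _ => ?_
      refine tendsto_finset_sum _ fun b _ => ?_
      have := (h1 i a).mul ((h2 b j).const_mul (X a b))
      simpa using this
    simpa using this.congr fun k => (hsum k).symm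
  have hconst : Tendsto (fun _ : ℕ => X i j) atTop (𝓝 0) :=
    hT.congr fun k => by rw [← hk k]
  have := tendsto_nhds_unique hconst tendsto_const_nhds
  simpa using this.symm

private lemma tlpork_entry_hasDerivAt_exp (M : Matrix ι ι ℂ) (τ : ℝ) (i j : ι) :
    HasDerivAt (fun s : ℝ => exp (s • M) i j) ((exp (τ • M) * M) i j) τ := by
  letI : SeminormedRing (Matrix ι ι ℂ) := Matrix.linftyOpSemiNormedRing
  letI : NormedRing (Matrix ι ι ℂ) := Matrix.linftyOpNormedRing
  letI : NormedAlgebra ℝ (Matrix ι ι ℂ) := Matrix.linftyOpNormedAlgebra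
  have h : HasDerivAt (fun s : ℝ => exp (s • M)) (exp (τ • M) * M) τ :=
    hasDerivAt_exp_smul_const M τ
  let L : Matrix ι ι ℂ →ₗ[ℝ] ℂ :=
    { toFun := fun X => X i j
      map_add' := fun _ _ => rfl
      map_smul' := fun _ _ => rfl }
  have := (L.toContinuousLinearMap.hasFDerivAt (x := exp (τ • M))).comp_hasDerivAt τ h
  exact this

private lemma tlpork_triple_entry_eq (M : Matrix ι κ ℂ) (X : Matrix ρ ι ℂ) (Y : Matrix κ σ ℂ)
    (i : ρ) (j : σ) :
    (X * M * Y) i j = ∑ b, ∑ a, X i a * M a b * Y b j := by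
  simp only [Matrix.mul_apply, Finset.sum_mul]

private lemma tlpork_entry_hasDerivAt_triple (A : Matrix ι ι ℂ) (M : Matrix ι κ ℂ)
    (S : Matrix κ κ ℂ) (τ : ℝ) (i : ι) (j : κ) :
    HasDerivAt (fun s : ℝ => (exp (s • A) * M * exp (s • S)) i j)
      ((exp (τ • A) * A * M * exp (τ • S)
        + exp (τ • A) * M * (exp (τ • S) * S)) i j) τ := by
  have hfun : (fun s : ℝ => (exp (s • A) * M * exp (s • S)) i j)
      = fun s : ℝ => ∑ b, ∑ a, exp (s • A) i a * M a b * exp (s • S) b j :=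
    funext fun s => tlpork_triple_entry_eq M _ _ i j
  rw [hfun, Matrix.add_apply, tlpork_triple_entry_eq M (exp (τ • A) * A) (exp (τ • S)) i j,
    tlpork_triple_entry_eq M (exp (τ • A)) (exp (τ • S) * S) i j, ← Finset.sum_add_distrib]
  refine HasDerivAt.fun_sum fun b _ => ?_
  rw [← Finset.sum_add_distrib]
  refine HasDerivAt.fun_sum fun a _ => ?_
  exact ((tlpork_entry_hasDerivAt_exp A τ i a).mul_const (M a b)).mul
    (tlpork_entry_hasDerivAt_exp S τ b j)

private lemma tlpork_entry_continuous (A : Matrix ι ι ℂ) (M : Matrix ι κ ℂ) (S : Matrix κ κ ℂ)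
    (i : ι) (j : κ) :
    Continuous fun s : ℝ => (exp (s • A) * M * exp (s • S)) i j := by
  rw [continuous_iff_continuousAt]
  exact fun τ => (tlpork_entry_hasDerivAt_triple A M S τ i j).continuousAt

private lemma tlpork_entry_continuous_pull (G : ℝ → Matrix ι κ ℂ)
    (hG : ∀ a b, Continuous fun τ => G τ a b)
    (P : Matrix ρ ι ℂ) (Q : Matrix κ σ ℂ) (i : ρ) (j : σ) :
    Continuous fun τ => (P * G τ * Q) i j := by
  have : (fun τ => (P * G τ * Q) i j) = fun τ => ∑ b, ∑ a, P i a * G τ a b * Q b j :=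
    funext fun τ => tlpork_triple_entry_eq (G τ) P Q i j
  rw [this]
  exact continuous_finset_sum _ fun b _ => continuous_finset_sum _ fun a _ =>
    (continuous_const.mul (hG a b)).mul continuous_const

private lemma tlpork_integral_pull (t : ℝ) (G : ℝ → Matrix ι κ ℂ)
    (hG : ∀ a b, Continuous fun τ => G τ a b)
    (P : Matrix ρ ι ℂ) (Q : Matrix κ σ ℂ) (i : ρ) (j : σ) :
    ∫ τ in (0:ℝ)..t, (P * G τ * Q) i j
      = (P * (Matrix.of fun a b => ∫ τ in (0:ℝ)..t, G τ a b) * Q) i j := by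
  have h1 : ∀ τ, (P * G τ * Q) i j = ∑ b, ∑ a, P i a * G τ a b * Q b j :=
    fun τ => tlpork_triple_entry_eq (G τ) P Q i j
  have hint : ∀ (a : ι) (b : κ), IntervalIntegrable (fun τ => P i a * G τ a b * Q b j)
      MeasureTheory.volume (0:ℝ) t :=
    fun a b => ((continuous_const.mul (hG a b)).mul continuous_const).intervalIntegrable 0 t
  simp only [h1]
  have hint2 : ∀ b : κ, IntervalIntegrable (fun τ => ∑ a, P i a * G τ a b * Q b j)
      MeasureTheory.volume (0:ℝ) t := by
    intro b
    have := IntervalIntegrable.sum (μ := MeasureTheory.volume) Finset.univ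
      (f := fun (a : ι) (τ : ℝ) => P i a * G τ a b * Q b j) (fun a _ => hint a b)
    have hfe : (∑ x : ι, fun τ : ℝ => P i x * G τ x b * Q b j)
        = fun τ : ℝ => ∑ a : ι, P i a * G τ a b * Q b j := by
      funext τ
      simp
    exact hfe ▸ this
  have hs1 : (∫ τ in (0:ℝ)..t, ∑ b, ∑ a, P i a * G τ a b * Q b j)
      = ∑ b, ∫ τ in (0:ℝ)..t, ∑ a, P i a * G τ a b * Q b j :=
    intervalIntegral.integral_finset_sum (fun b _ => hint2 b)
  rw [hs1, tlpork_triple_entry_eq (Matrix.of fun a b => ∫ τ in (0:ℝ)..t, G τ a b) P Q i j]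
  refine Finset.sum_congr rfl fun b _ => ?_
  have hs2 : (∫ τ in (0:ℝ)..t, ∑ a, P i a * G τ a b * Q b j)
      = ∑ a, ∫ τ in (0:ℝ)..t, P i a * G τ a b * Q b j :=
    intervalIntegral.integral_finset_sum (fun a _ => hint a b)
  rw [hs2]
  refine Finset.sum_congr rfl fun a _ => ?_
  have h2 : ∫ τ in (0:ℝ)..t, P i a * G τ a b * Q b j
      = P i a * (∫ τ in (0:ℝ)..t, G τ a b) * Q b j := by
    rw [intervalIntegral.integral_mul_const]
    congr 1
    exact intervalIntegral.integral_const_mul _ _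
  rw [h2, Matrix.of_apply]

private lemma tlpork_comm_exp_exp (M : Matrix ι ι ℂ) (s u : ℝ) :
    exp (s • M) * exp (u • M) = exp (u • M) * exp (s • M) :=
  ((((Commute.refl M).smul_left s).smul_right u).exp).eq

/-- The key finite-horizon FTC/Stein relation. -/
private lemma tlpork_key_ftc (t : ℝ) (A : Matrix ι ι ℂ) (V M : Matrix ι κ ℂ)
    (S : Matrix κ κ ℂ)
    (hSyl : A * V + V * S = M - exp (t • A) * M * exp (t • S)) :
    (Matrix.of fun i j => ∫ τ in (0:ℝ)..t, (exp (τ • A) * M * exp (τ • S)) i j)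
        - exp (t • A)
          * (Matrix.of fun i j => ∫ τ in (0:ℝ)..t, (exp (τ • A) * M * exp (τ • S)) i j)
          * exp (t • S)
      = exp (t • A) * V * exp (t • S) - V := by
  set ψ : ℝ → Matrix ι κ ℂ := fun τ => exp (τ • A) * M * exp (τ • S) with hψ
  have hψc : ∀ i j, Continuous fun τ => ψ τ i j := fun i j => tlpork_entry_continuous A M S i j
  have hGid : ∀ τ : ℝ, exp (τ • A) * A * V * exp (τ • S)
      + exp (τ • A) * V * (exp (τ • S) * S)
      = ψ τ - exp (t • A) * ψ τ * exp (t • S) := by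
    intro τ
    have h1 : exp (τ • S) * S = S * exp (τ • S) :=
      (((Commute.refl S).smul_left τ).exp_left).eq
    have h2 : exp (τ • A) * A * V * exp (τ • S)
        + exp (τ • A) * V * (exp (τ • S) * S)
        = exp (τ • A) * (A * V + V * S) * exp (τ • S) := by
      rw [h1]
      simp only [Matrix.mul_add, Matrix.add_mul, Matrix.mul_assoc]
    rw [h2, hSyl, Matrix.mul_sub, Matrix.sub_mul]
    congr 1
    calc exp (τ • A) * (exp (t • A) * M * exp (t • S)) * exp (τ • S)
        = (exp (τ • A) * exp (t • A)) * M * (exp (t • S) * exp (τ • S)) := by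
          simp only [Matrix.mul_assoc]
      _ = (exp (t • A) * exp (τ • A)) * M * (exp (τ • S) * exp (t • S)) := by
          rw [tlpork_comm_exp_exp A τ t, tlpork_comm_exp_exp S t τ]
      _ = exp (t • A) * (exp (τ • A) * M * exp (τ • S)) * exp (t • S) := by
          simp only [Matrix.mul_assoc]
  ext i j
  rw [Matrix.sub_apply, Matrix.of_apply,
    show (exp (t • A) * (Matrix.of fun i j => ∫ τ in (0:ℝ)..t, ψ τ i j)
      * exp (t • S)) i j = ∫ τ in (0:ℝ)..t, (exp (t • A) * ψ τ * exp (t • S)) i j from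
      (tlpork_integral_pull t ψ hψc _ _ i j).symm]
  rw [← intervalIntegral.integral_sub ((hψc i j).intervalIntegrable 0 t)
    ((tlpork_entry_continuous_pull ψ hψc _ _ i j).intervalIntegrable 0 t)]
  have hder : ∀ τ : ℝ, HasDerivAt (fun s : ℝ => (exp (s • A) * V * exp (s • S)) i j)
      (ψ τ i j - (exp (t • A) * ψ τ * exp (t • S)) i j) τ := by
    intro τ
    have h := tlpork_entry_hasDerivAt_triple A V S τ i j
    rw [show (exp (τ • A) * A * V * exp (τ • S)
        + exp (τ • A) * V * (exp (τ • S) * S)) i j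
        = ψ τ i j - (exp (t • A) * ψ τ * exp (t • S)) i j by
      rw [hGid τ, Matrix.sub_apply]] at h
    exact h
  have hcont : Continuous fun τ => ψ τ i j - (exp (t • A) * ψ τ * exp (t • S)) i j :=
    (hψc i j).sub (tlpork_entry_continuous_pull ψ hψc _ _ i j)
  rw [intervalIntegral.integral_eq_sub_of_hasDerivAt (fun τ _ => hder τ)
    (hcont.intervalIntegrable 0 t)]
  simp [Matrix.sub_apply]

end TLPORKAux

/-- In the setting of Theorem 1, with `C_r = C V_t`, `P̂_T = Q_S⁻¹`, and
`P̃_T = V_t Q_S⁻¹`, the optimality condition `C_r P̂_T = C P̃_T` holds and the reduced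
model is time-limited pseudo-optimal:
`‖H−Ĥ_r‖²_{H₂,t} = ‖H‖²_{H₂,t} − ‖Ĥ_r‖²_{H₂,t}` in trace form. -/
theorem tlpork_pseudo_optimality
    (n r m p : ℕ) (A : Matrix (Fin n) (Fin n) ℂ) (B : Matrix (Fin n) (Fin m) ℂ)
    (C : Matrix (Fin p) (Fin n) ℂ)
    (hA : ∀ μ ∈ spectrum ℂ A, μ.re < 0)
    (t : ℝ) (ht : 0 < t)
    (S_r : Matrix (Fin r) (Fin r) ℂ) (L_r : Matrix (Fin m) (Fin r) ℂ)
    (hS : ∀ μ ∈ spectrum ℂ S_r, 0 < μ.re)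
    (Q_S : Matrix (Fin r) (Fin r) ℂ) (hQinv : IsUnit Q_S)
    (hLyap : -(S_rᴴ * Q_S) - Q_S * S_r + L_rᴴ * L_r
        - exp (-(t • S_rᴴ)) * L_rᴴ * L_r * exp (-(t • S_r)) = 0)
    (A_r : Matrix (Fin r) (Fin r) ℂ) (B_r : Matrix (Fin r) (Fin m) ℂ)
    (C_r : Matrix (Fin p) (Fin r) ℂ)
    (hA_r : A_r = -(Q_S⁻¹ * S_rᴴ * Q_S)) (hB_r : B_r = -(Q_S⁻¹ * L_rᴴ))
    (hA_rHur : ∀ μ ∈ spectrum ℂ A_r, μ.re < 0)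
    (V_t : Matrix (Fin n) (Fin r) ℂ)
    (hVt : A * V_t = V_t * S_r + B * L_r - exp (t • A) * B * L_r * exp (-(t • S_r)))
    (hC_r : C_r = C * V_t)
    (P_T : Matrix (Fin n) (Fin n) ℂ) (Phat : Matrix (Fin r) (Fin r) ℂ)
    (Ptilde : Matrix (Fin n) (Fin r) ℂ)
    (hP : P_T = Matrix.of fun i j =>
      ∫ τ in (0:ℝ)..t, (exp (τ • A) * B * Bᴴ * exp (τ • Aᴴ)) i j)
    (hPhat : Phat = Matrix.of fun i j =>
      ∫ τ in (0:ℝ)..t, (exp (τ • A_r) * B_r * B_rᴴ * exp (τ • A_rᴴ)) i j)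
    (hPtilde : Ptilde = Matrix.of fun i j =>
      ∫ τ in (0:ℝ)..t, (exp (τ • A) * B * B_rᴴ * exp (τ • A_rᴴ)) i j) :
    C_r * Phat = C * Ptilde ∧
      (Matrix.trace (C * P_T * Cᴴ)).re - 2 * (Matrix.trace (C * Ptilde * C_rᴴ)).re
          + (Matrix.trace (C_r * Phat * C_rᴴ)).re
        = (Matrix.trace (C * P_T * Cᴴ)).re - (Matrix.trace (C_r * Phat * C_rᴴ)).re := by
  classical
  open Filter Topology in
  -- basic invertibility facts
  have hQdet : IsUnit Q_S.det := (Matrix.isUnit_iff_isUnit_det Q_S).mp hQinv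
  have hQHdet : IsUnit Q_Sᴴ.det := by
    rw [Matrix.det_conjTranspose]
    exact hQdet.star
  -- rewrite the negated smuls
  have hns : ∀ (q : ℕ) (X : Matrix (Fin q) (Fin q) ℂ), -(t • X) = t • (-X) :=
    fun q X => (smul_neg t X).symm
  rw [hns r S_r, hns r S_rᴴ] at hLyap
  rw [hns r S_r] at hVt
  -- conj-transpose of real smul
  have hsmulH : ∀ (τ : ℝ) (q q' : ℕ) (X : Matrix (Fin q) (Fin q') ℂ), (τ • X)ᴴ = τ • Xᴴ := by
    intro τ q q' X
    ext a b
    simp [Matrix.conjTranspose_apply]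
  -- exponential conjugation facts
  have hAr_smul : ∀ τ : ℝ, τ • A_r = Q_S⁻¹ * (τ • (-S_rᴴ)) * Q_S := by
    intro τ
    rw [hA_r, mul_smul_comm, smul_mul_assoc]
    congr 1
    simp [Matrix.neg_mul, Matrix.mul_neg]
  have hexpAr : ∀ τ : ℝ, exp (τ • A_r) = Q_S⁻¹ * exp (τ • (-S_rᴴ)) * Q_S := by
    intro τ
    rw [hAr_smul τ]
    exact Matrix.exp_conj' Q_S _ hQinv
  have hexpArH : ∀ τ : ℝ, exp (τ • A_rᴴ) = Q_Sᴴ * exp (τ • (-S_r)) * Q_Sᴴ⁻¹ := by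
    intro τ
    have h1 : τ • A_rᴴ = (τ • A_r)ᴴ := (hsmulH τ r r A_r).symm
    rw [h1, Matrix.exp_conjTranspose, hexpAr τ, Matrix.conjTranspose_mul,
      Matrix.conjTranspose_mul, ← Matrix.exp_conjTranspose, hsmulH,
      Matrix.conjTranspose_neg, Matrix.conjTranspose_conjTranspose,
      Matrix.conjTranspose_nonsing_inv, ← Matrix.mul_assoc]
  -- conj transpose of B_r
  have hBrH : B_rᴴ = -(L_r * Q_Sᴴ⁻¹) := by
    rw [hB_r, Matrix.conjTranspose_neg, Matrix.conjTranspose_mul,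
      Matrix.conjTranspose_nonsing_inv, Matrix.conjTranspose_conjTranspose]
  -- J and K
  set J : Matrix (Fin n) (Fin r) ℂ := Matrix.of fun i j =>
    ∫ τ in (0:ℝ)..t, (exp (τ • A) * (B * L_r) * exp (τ • (-S_r))) i j with hJdef
  set K : Matrix (Fin r) (Fin r) ℂ := Matrix.of fun i j =>
    ∫ τ in (0:ℝ)..t, (exp (τ • (-S_rᴴ)) * (L_rᴴ * L_r) * exp (τ • (-S_r))) i j with hKdef
  have hψc : ∀ i j, Continuous fun τ : ℝ =>
      (exp (τ • A) * (B * L_r) * exp (τ • (-S_r))) i j :=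
    fun i j => tlpork_entry_continuous A (B * L_r) (-S_r) i j
  have hχc : ∀ i j, Continuous fun τ : ℝ =>
      (exp (τ • (-S_rᴴ)) * (L_rᴴ * L_r) * exp (τ • (-S_r))) i j :=
    fun i j => tlpork_entry_continuous (-S_rᴴ) (L_rᴴ * L_r) (-S_r) i j
  -- cancellation helpers
  have hc1 : ∀ (q : ℕ) (X : Matrix (Fin r) (Fin q) ℂ), Q_S * (Q_S⁻¹ * X) = X :=
    fun q X => Matrix.mul_nonsing_inv_cancel_left Q_S X hQdet
  have hc2 : ∀ (q : ℕ) (X : Matrix (Fin r) (Fin q) ℂ), Q_Sᴴ⁻¹ * (Q_Sᴴ * X) = X :=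
    fun q X => Matrix.nonsing_inv_mul_cancel_left Q_Sᴴ X hQHdet
  -- integrand identities
  have hPtilde_int : ∀ τ : ℝ, exp (τ • A) * B * B_rᴴ * exp (τ • A_rᴴ)
      = (-1 : Matrix (Fin n) (Fin n) ℂ)
        * (exp (τ • A) * (B * L_r) * exp (τ • (-S_r))) * Q_Sᴴ⁻¹ := by
    intro τ
    rw [hexpArH τ, hBrH]
    simp only [Matrix.mul_neg, Matrix.neg_mul, Matrix.mul_assoc, Matrix.one_mul, hc2]
  have hPhat_int : ∀ τ : ℝ, exp (τ • A_r) * B_r * B_rᴴ * exp (τ • A_rᴴ)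
      = Q_S⁻¹ * (exp (τ • (-S_rᴴ)) * (L_rᴴ * L_r) * exp (τ • (-S_r))) * Q_Sᴴ⁻¹ := by
    intro τ
    rw [hexpAr τ, hexpArH τ, hBrH, hB_r]
    simp only [Matrix.mul_neg, Matrix.neg_mul, neg_neg, Matrix.mul_assoc, hc1, hc2]
  -- closed forms for Ptilde and Phat
  have hPtilde_eq : Ptilde = (-1 : Matrix (Fin n) (Fin n) ℂ) * J * Q_Sᴴ⁻¹ := by
    rw [hPtilde]
    ext i j
    rw [Matrix.of_apply]
    calc (∫ τ in (0:ℝ)..t, (exp (τ • A) * B * B_rᴴ * exp (τ • A_rᴴ)) i j)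
        = ∫ τ in (0:ℝ)..t, ((-1 : Matrix (Fin n) (Fin n) ℂ)
            * (exp (τ • A) * (B * L_r) * exp (τ • (-S_r))) * Q_Sᴴ⁻¹) i j := by
          simp only [hPtilde_int]
      _ = ((-1 : Matrix (Fin n) (Fin n) ℂ) * J * Q_Sᴴ⁻¹) i j :=
          tlpork_integral_pull t _ hψc _ _ i j
  have hPhat_eq : Phat = Q_S⁻¹ * K * Q_Sᴴ⁻¹ := by
    rw [hPhat]
    ext i j
    rw [Matrix.of_apply]
    calc (∫ τ in (0:ℝ)..t, (exp (τ • A_r) * B_r * B_rᴴ * exp (τ • A_rᴴ)) i j)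
        = ∫ τ in (0:ℝ)..t, (Q_S⁻¹
            * (exp (τ • (-S_rᴴ)) * (L_rᴴ * L_r) * exp (τ • (-S_r))) * Q_Sᴴ⁻¹) i j := by
          simp only [hPhat_int]
      _ = (Q_S⁻¹ * K * Q_Sᴴ⁻¹) i j := tlpork_integral_pull t _ hχc _ _ i j
  -- the two FTC relations
  have hsyl1 : A * V_t + V_t * (-S_r)
      = (B * L_r) - exp (t • A) * (B * L_r) * exp (t • (-S_r)) := by
    rw [Matrix.mul_neg, hVt]
    simp only [Matrix.mul_assoc]
    abel
  have hJrel := tlpork_key_ftc t A V_t (B * L_r) (-S_r) hsyl1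
  have hsyl2 : (-S_rᴴ) * (-Q_S) + (-Q_S) * (-S_r)
      = (L_rᴴ * L_r) - exp (t • (-S_rᴴ)) * (L_rᴴ * L_r) * exp (t • (-S_r)) := by
    have h3 : exp (t • (-S_rᴴ)) * L_rᴴ * L_r * exp (t • (-S_r))
        = exp (t • (-S_rᴴ)) * (L_rᴴ * L_r) * exp (t • (-S_r)) := by
      simp only [Matrix.mul_assoc]
    rw [Matrix.neg_mul, Matrix.mul_neg, neg_neg, Matrix.neg_mul, Matrix.mul_neg, neg_neg]
    calc S_rᴴ * Q_S + Q_S * S_r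
        = ((L_rᴴ * L_r) - exp (t • (-S_rᴴ)) * (L_rᴴ * L_r) * exp (t • (-S_r)))
          - (-(S_rᴴ * Q_S) - Q_S * S_r + L_rᴴ * L_r
              - exp (t • (-S_rᴴ)) * L_rᴴ * L_r * exp (t • (-S_r))) := by
          rw [h3]; abel
      _ = (L_rᴴ * L_r) - exp (t • (-S_rᴴ)) * (L_rᴴ * L_r) * exp (t • (-S_r)) := by
          rw [hLyap, sub_zero]
  have hKrel := tlpork_key_ftc t (-S_rᴴ) (-Q_S) (L_rᴴ * L_r) (-S_r) hsyl2
  -- decay of powers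
  have hspec_smul : ∀ (q : ℕ) (M : Matrix (Fin q) (Fin q) ℂ),
      (∀ μ ∈ spectrum ℂ M, μ.re < 0) → ∀ μ ∈ spectrum ℂ (t • M), μ.re < 0 := by
    intro q M hM μ hμ
    have ht0 : ((t : ℂ)) ≠ 0 := by
      exact_mod_cast ht.ne'
    have hsm : (t : ℝ) • M = (Units.mk0 (t : ℂ) ht0) • M := by
      ext a b
      simp [Units.smul_def, Complex.real_smul]
    rw [hsm, spectrum.unit_smul_eq_smul] at hμ
    obtain ⟨ν, hν, rfl⟩ := hμ
    have hν' := hM ν hν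
    simp only [Units.smul_def, Units.val_mk0, smul_eq_mul]
    rw [Complex.re_ofReal_mul]
    exact mul_neg_of_pos_of_neg ht hν'
  have hnegS : ∀ μ ∈ spectrum ℂ (-S_r), μ.re < 0 := by
    intro μ hμ
    rw [← spectrum.neg_eq, Set.mem_neg] at hμ
    have := hS (-μ) hμ
    simp only [Complex.neg_re] at this
    linarith
  have hd1 : ∀ i j, Filter.Tendsto (fun k : ℕ => (exp (t • A) ^ k) i j)
      Filter.atTop (nhds 0) :=
    fun i j => tlpork_tendsto_pow_exp_entry (t • A) (hspec_smul n A hA) i j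
  have hd2 : ∀ i j, Filter.Tendsto (fun k : ℕ => (exp (t • (-S_r)) ^ k) i j)
      Filter.atTop (nhds 0) :=
    fun i j => tlpork_tendsto_pow_exp_entry (t • (-S_r)) (hspec_smul r (-S_r) hnegS) i j
  have hN3H : exp (t • (-S_rᴴ)) = (exp (t • (-S_r)))ᴴ := by
    rw [← Matrix.exp_conjTranspose]
    congr 1
    rw [hsmulH, Matrix.conjTranspose_neg]
  have hd3 : ∀ i j, Filter.Tendsto (fun k : ℕ => (exp (t • (-S_rᴴ)) ^ k) i j)
      Filter.atTop (nhds 0) := by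
    intro i j
    have heq : ∀ k : ℕ, (exp (t • (-S_rᴴ)) ^ k) i j = star ((exp (t • (-S_r)) ^ k) j i) := by
      intro k
      rw [hN3H, ← Matrix.conjTranspose_pow]
      rfl
    have := (continuous_star.tendsto (0 : ℂ)).comp (hd2 j i)
    simp only [star_zero] at this
    exact this.congr fun k => (heq k).symm
  -- Stein uniqueness
  have hJval : J = -V_t := by
    have hX : J + V_t = exp (t • A) * (J + V_t) * exp (t • (-S_r)) := by
      calc J + V_t
          = (J - exp (t • A) * J * exp (t • (-S_r)))
            + (exp (t • A) * J * exp (t • (-S_r)) + V_t) := by abel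
        _ = (exp (t • A) * V_t * exp (t • (-S_r)) - V_t)
            + (exp (t • A) * J * exp (t • (-S_r)) + V_t) := by rw [hJrel]
        _ = exp (t • A) * J * exp (t • (-S_r))
            + exp (t • A) * V_t * exp (t • (-S_r)) := by abel
        _ = exp (t • A) * (J + V_t) * exp (t • (-S_r)) := by
            rw [Matrix.mul_add, Matrix.add_mul]
    have := tlpork_stein_zero _ _ hd1 hd2 (J + V_t) hX
    exact eq_neg_of_add_eq_zero_left this
  have hKval : K = Q_S := by
    have hKrel' : K - exp (t • (-S_rᴴ)) * K * exp (t • (-S_r))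
        = Q_S - exp (t • (-S_rᴴ)) * Q_S * exp (t • (-S_r)) := by
      rw [hKrel, Matrix.mul_neg, Matrix.neg_mul, sub_neg_eq_add]
      abel
    have hX : K - Q_S = exp (t • (-S_rᴴ)) * (K - Q_S) * exp (t • (-S_r)) := by
      calc K - Q_S
          = (K - exp (t • (-S_rᴴ)) * K * exp (t • (-S_r)))
            + (exp (t • (-S_rᴴ)) * K * exp (t • (-S_r)) - Q_S) := by abel
        _ = (Q_S - exp (t • (-S_rᴴ)) * Q_S * exp (t • (-S_r)))
            + (exp (t • (-S_rᴴ)) * K * exp (t • (-S_r)) - Q_S) := by rw [hKrel']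
        _ = exp (t • (-S_rᴴ)) * K * exp (t • (-S_r))
            - exp (t • (-S_rᴴ)) * Q_S * exp (t • (-S_r)) := by abel
        _ = exp (t • (-S_rᴴ)) * (K - Q_S) * exp (t • (-S_r)) := by
            rw [Matrix.mul_sub, Matrix.sub_mul]
    have := tlpork_stein_zero _ _ hd3 hd2 (K - Q_S) hX
    exact sub_eq_zero.mp this
  -- final forms
  have hPt : Ptilde = V_t * Q_Sᴴ⁻¹ := by
    rw [hPtilde_eq, hJval]
    simp [Matrix.neg_mul, Matrix.mul_neg]
  have hPh : Phat = Q_Sᴴ⁻¹ := by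
    rw [hPhat_eq, hKval, Matrix.nonsing_inv_mul Q_S hQdet, Matrix.one_mul]
  have hfirst : C_r * Phat = C * Ptilde := by
    rw [hC_r, hPh, hPt, Matrix.mul_assoc]
  refine ⟨hfirst, ?_⟩
  have htr : Matrix.trace (C * Ptilde * C_rᴴ) = Matrix.trace (C_r * Phat * C_rᴴ) := by
    rw [hfirst]
  rw [htr]
  ring
end

section
/- Theorem 2(v) core computation: with A Hurwitz and the dual setup A_r = −P_S S_r* P_S^{-1}, C_r = −B̄* P_S^{-1}, Q̂_T = P_S^{-1}, suppose W ∈ ℂ^{n×r} satisfies W* A = S_r W* + B̄ C − e^{−S_r t} B̄ C e^{At} (the time-limited output Sylvester equation). Then Y := Q̂_T W* satisfies A_r* Y + Y A + C_r* C − e^{A_r* t} C_r* C e^{At} = 0; by uniqueness, the cross observability Gramian Q̃_T equals P_S^{-1} W*. -/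
open Matrix MeasureTheory NormedSpace

attribute [local instance] Matrix.linftyOpNormedAddCommGroup Matrix.linftyOpNormedSpace
  Matrix.linftyOpNormedRing Matrix.linftyOpNormedAlgebra

namespace TLGaux

lemma mem_spectrum_iff_det {a : ℕ} (M : Matrix (Fin a) (Fin a) ℂ) (μ : ℂ) :
    μ ∈ spectrum ℂ M ↔ (μ • (1 : Matrix (Fin a) (Fin a) ℂ) - M).det = 0 := by
  rw [spectrum.mem_iff, Algebra.algebraMap_eq_smul_one, Matrix.isUnit_iff_isUnit_det,
    isUnit_iff_ne_zero, not_not]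

lemma eval_charpoly {a : ℕ} (M : Matrix (Fin a) (Fin a) ℂ) (μ : ℂ) :
    (Matrix.charpoly M).eval μ = (μ • (1 : Matrix (Fin a) (Fin a) ℂ) - M).det := by
  have h1 := RingHom.map_det (Polynomial.evalRingHom μ) (Matrix.charmatrix M)
  rw [RingHom.mapMatrix_apply] at h1
  rw [Matrix.charpoly, show Polynomial.eval μ (Matrix.charmatrix M).det = _ from h1]
  congr 1
  ext i j
  by_cases h : i = j
  · subst h
    simp [Matrix.charmatrix_apply_eq, Matrix.smul_apply, Matrix.one_apply]
  · simp [Matrix.charmatrix_apply_ne _ _ _ h, Matrix.smul_apply, Matrix.one_apply, h]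


lemma conj_mem_spectrum {a : ℕ} {M : Matrix (Fin a) (Fin a) ℂ} {μ : ℂ}
    (h : μ ∈ spectrum ℂ Mᴴ) : (starRingEnd ℂ) μ ∈ spectrum ℂ M := by
  rw [mem_spectrum_iff_det] at h ⊢
  have key : (μ • (1 : Matrix (Fin a) (Fin a) ℂ) - Mᴴ)
      = ((starRingEnd ℂ μ) • (1 : Matrix (Fin a) (Fin a) ℂ) - M)ᴴ := by
    rw [Matrix.conjTranspose_sub, Matrix.conjTranspose_smul, Matrix.conjTranspose_one]
    simp
  rw [key, Matrix.det_conjTranspose] at h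
  exact star_eq_zero.mp h

lemma sylvester_unique {a b : ℕ} (M : Matrix (Fin a) (Fin a) ℂ) (N : Matrix (Fin b) (Fin b) ℂ)
    (hdisj : ∀ μ ∈ spectrum ℂ M, ∀ ν ∈ spectrum ℂ N, μ + ν ≠ 0)
    (X : Matrix (Fin a) (Fin b) ℂ) (hX : M * X + X * N = 0) : X = 0 := by
  rcases Nat.eq_zero_or_pos a with ha | ha
  · subst ha; ext i j; exact i.elim0
  rcases Nat.eq_zero_or_pos b with hb | hb
  · subst hb; ext i j; exact j.elim0
  haveI : Nonempty (Fin b) := ⟨⟨0, hb⟩⟩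
  have h1 : M * X = X * (-N) := by
    rw [add_eq_zero_iff_eq_neg] at hX
    rw [hX, Matrix.mul_neg]
  have key : ∀ k : ℕ, M ^ k * X = X * (-N) ^ k := by
    intro k; induction k with
    | zero => simp
    | succ k ih =>
      rw [pow_succ, pow_succ, Matrix.mul_assoc, h1, ← Matrix.mul_assoc, ih, Matrix.mul_assoc]
  have hp : ∀ q : Polynomial ℂ, (Polynomial.aeval M q) * X = X * Polynomial.aeval (-N) q := by
    intro q
    induction q using Polynomial.induction_on' with
    | add p q hp hq => rw [map_add, map_add, Matrix.add_mul, Matrix.mul_add, hp, hq]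
    | monomial k c =>
      simp only [Polynomial.aeval_monomial, ← Algebra.smul_def]
      rw [Matrix.smul_mul, key k, Matrix.mul_smul]
  have h0 : X * Polynomial.aeval (-N) (Matrix.charpoly M) = 0 := by
    rw [← hp, Matrix.aeval_self_charpoly, Matrix.zero_mul]
  have hdeg : 0 < (Matrix.charpoly M).degree := by
    rw [Matrix.charpoly_degree_eq_dim, Fintype.card_fin]
    exact_mod_cast ha
  have hunit : IsUnit (Polynomial.aeval (-N) (Matrix.charpoly M)) := by
    rw [← spectrum.zero_notMem_iff ℂ,
      spectrum.map_polynomial_aeval_of_degree_pos (-N) _ hdeg]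
    rintro ⟨ν, hν, hev⟩
    have hνM : ν ∈ spectrum ℂ M := by
      rw [mem_spectrum_iff_det, ← eval_charpoly]; exact hev
    have hνN : -ν ∈ spectrum ℂ N := by
      rw [← spectrum.neg_eq] at hν
      simpa using hν
    exact hdisj ν hνM (-ν) hνN (by ring)
  have hdet := (Matrix.isUnit_iff_isUnit_det _).mp hunit
  calc X = X * (Polynomial.aeval (-N) (Matrix.charpoly M)
            * (Polynomial.aeval (-N) (Matrix.charpoly M))⁻¹) := by
        rw [Matrix.mul_nonsing_inv _ hdet, Matrix.mul_one]
    _ = 0 := by rw [← Matrix.mul_assoc, h0, Matrix.zero_mul]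

noncomputable def entryCLM {a b : ℕ} (i : Fin a) (j : Fin b) :
    Matrix (Fin a) (Fin b) ℂ →L[ℂ] ℂ :=
  LinearMap.toContinuousLinearMap
    ((LinearMap.proj j).comp (LinearMap.proj (R := ℂ) (φ := fun _ : Fin a => Fin b → ℂ) i))

@[simp] lemma entryCLM_apply {a b : ℕ} (i : Fin a) (j : Fin b) (M : Matrix (Fin a) (Fin b) ℂ) :
    entryCLM i j M = M i j := rfl

lemma hasDerivAt_exp_entry_left {a : ℕ} (M : Matrix (Fin a) (Fin a) ℂ) (τ : ℝ) (i k : Fin a) :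
    HasDerivAt (fun s : ℝ => exp (s • M) i k) ((M * exp (τ • M)) i k) τ := by
  have h := hasDerivAt_exp_smul_const' (𝕂 := ℝ) M τ
  have h2 := ((entryCLM i k).restrictScalars ℝ).hasFDerivAt.comp_hasDerivAt τ h
  exact h2

lemma hasDerivAt_exp_entry_right {a : ℕ} (M : Matrix (Fin a) (Fin a) ℂ) (τ : ℝ) (i k : Fin a) :
    HasDerivAt (fun s : ℝ => exp (s • M) i k) ((exp (τ • M) * M) i k) τ := by
  have h := hasDerivAt_exp_smul_const (𝕂 := ℝ) M τ
  have h2 := ((entryCLM i k).restrictScalars ℝ).hasFDerivAt.comp_hasDerivAt τ h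
  exact h2

lemma entry3 {a b : ℕ} (X : Matrix (Fin a) (Fin a) ℂ) (K : Matrix (Fin a) (Fin b) ℂ)
    (Y : Matrix (Fin b) (Fin b) ℂ) (i : Fin a) (j : Fin b) :
    (X * K * Y) i j = ∑ k, ∑ l, X i k * K k l * Y l j := by
  simp_rw [Matrix.mul_apply, Finset.sum_mul]
  rw [Finset.sum_comm]

lemma hasDerivAt_G {a b : ℕ} (M : Matrix (Fin a) (Fin a) ℂ) (K : Matrix (Fin a) (Fin b) ℂ)
    (N : Matrix (Fin b) (Fin b) ℂ) (τ : ℝ) (i : Fin a) (j : Fin b) :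
    HasDerivAt (fun s : ℝ => (exp (s • M) * K * exp (s • N)) i j)
      ((M * (exp (τ • M) * K * exp (τ • N))
        + (exp (τ • M) * K * exp (τ • N)) * N) i j) τ := by
  have H : HasDerivAt (fun s : ℝ => ∑ k, ∑ l, exp (s • M) i k * K k l * exp (s • N) l j)
      (∑ k, ∑ l, ((M * exp (τ • M)) i k * K k l * exp (τ • N) l j
        + exp (τ • M) i k * K k l * (exp (τ • N) * N) l j)) τ := by
    apply HasDerivAt.fun_sum; intro k _
    apply HasDerivAt.fun_sum; intro l _
    exact ((hasDerivAt_exp_entry_left M τ i k).mul_const (K k l)).mul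
      (hasDerivAt_exp_entry_right N τ l j)
  have hfun : (fun s : ℝ => (exp (s • M) * K * exp (s • N)) i j)
      = fun s : ℝ => ∑ k, ∑ l, exp (s • M) i k * K k l * exp (s • N) l j := by
    funext s; rw [entry3]
  rw [hfun]
  convert H using 1
  rw [Matrix.add_apply, ← Matrix.mul_assoc, ← Matrix.mul_assoc,
    Matrix.mul_assoc (exp (τ • M) * K), entry3, entry3, ← Finset.sum_add_distrib]
  exact Finset.sum_congr rfl fun k _ => (Finset.sum_add_distrib).symm

lemma qtilde_eq {a b : ℕ} (M : Matrix (Fin a) (Fin a) ℂ) (K : Matrix (Fin a) (Fin b) ℂ)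
    (N : Matrix (Fin b) (Fin b) ℂ) (t : ℝ) (Q : Matrix (Fin a) (Fin b) ℂ)
    (hQ : Q = Matrix.of fun i j => ∫ τ in (0:ℝ)..t, (exp (τ • M) * K * exp (τ • N)) i j) :
    M * Q + Q * N + K - exp (t • M) * K * exp (t • N) = 0 := by
  set G : ℝ → Matrix (Fin a) (Fin b) ℂ := fun τ => exp (τ • M) * K * exp (τ • N) with hG
  have hcG : ∀ (i : Fin a) (j : Fin b), Continuous fun τ : ℝ => G τ i j := by
    intro i j
    have hdiff : Differentiable ℝ (fun τ : ℝ => G τ i j) :=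
      fun τ => (hasDerivAt_G M K N τ i j).differentiableAt
    exact hdiff.continuous
  have hD : ∀ (i : Fin a) (j : Fin b), Continuous fun τ : ℝ => (M * G τ + G τ * N) i j := by
    intro i j
    simp only [Matrix.add_apply, Matrix.mul_apply]
    exact (continuous_finset_sum _ fun k _ => continuous_const.mul (hcG k j)).add
      (continuous_finset_sum _ fun k _ => (hcG i k).mul continuous_const)
  have hFTC : ∀ (i : Fin a) (j : Fin b),
      (∫ τ in (0:ℝ)..t, (M * G τ + G τ * N) i j) = G t i j - G 0 i j := fun i j =>
    intervalIntegral.integral_eq_sub_of_hasDerivAt (fun τ _ => hasDerivAt_G M K N τ i j)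
      ((hD i j).intervalIntegrable _ _)
  have hQ' : ∀ (i : Fin a) (j : Fin b), Q i j = ∫ τ in (0:ℝ)..t, G τ i j := by
    intro i j; rw [hQ]; rfl
  have hG0 : G 0 = K := by simp [hG]
  ext i j
  have h1 : (M * Q) i j = ∫ τ in (0:ℝ)..t, (∑ k, M i k * G τ k j) := by
    rw [Matrix.mul_apply]
    rw [intervalIntegral.integral_finset_sum
      (fun k _ => (continuous_const.fun_mul (hcG k j)).intervalIntegrable _ _)]
    exact Finset.sum_congr rfl fun k _ => by
      rw [hQ' k j, ← intervalIntegral.integral_const_mul]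
  have h2 : (Q * N) i j = ∫ τ in (0:ℝ)..t, (∑ k, G τ i k * N k j) := by
    rw [Matrix.mul_apply]
    rw [intervalIntegral.integral_finset_sum
      (fun k _ => ((hcG i k).fun_mul continuous_const).intervalIntegrable _ _)]
    exact Finset.sum_congr rfl fun k _ => by
      rw [hQ' i k, ← intervalIntegral.integral_mul_const]
  have h3 : (M * Q + Q * N) i j = G t i j - G 0 i j := by
    rw [Matrix.add_apply, h1, h2, ← intervalIntegral.integral_add
      ((continuous_finset_sum _ fun k _ => continuous_const.fun_mul (hcG k j)).intervalIntegrable _ _)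
      ((continuous_finset_sum _ fun k _ => (hcG i k).fun_mul continuous_const).intervalIntegrable _ _),
      ← hFTC i j]
    apply intervalIntegral.integral_congr
    intro τ _
    simp only [Matrix.add_apply, Matrix.mul_apply]
  have : (M * Q + Q * N + K - exp (t • M) * K * exp (t • N)) i j
      = (M * Q + Q * N) i j + K i j - G t i j := by
    simp [Matrix.sub_apply, Matrix.add_apply, hG]
  rw [Matrix.zero_apply, this, h3, hG0]
  ring

end TLGaux

open TLGaux

/-- Theorem 2(v) core computation: `Y = P_S⁻¹ Wᴴ` satisfies the
time-limited output cross-Gramian Sylvester equation, and hence by uniqueness the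
cross observability Gramian `Q̃_T` equals `P_S⁻¹ Wᴴ`. -/
theorem theorem2_v_cross_gramian
    (n r p : ℕ) (A : Matrix (Fin n) (Fin n) ℂ) (C : Matrix (Fin p) (Fin n) ℂ)
    (hA : ∀ μ ∈ spectrum ℂ A, μ.re < 0)
    (t : ℝ) (ht : 0 < t)
    (S_r : Matrix (Fin r) (Fin r) ℂ) (Bbar : Matrix (Fin r) (Fin p) ℂ)
    (hS : ∀ μ ∈ spectrum ℂ S_r, 0 < μ.re)
    (P_S : Matrix (Fin r) (Fin r) ℂ) (hPinv : IsUnit P_S)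
    (hLyap : -(S_r * P_S) - P_S * S_rᴴ + Bbar * Bbarᴴ
        - exp (-(t • S_r)) * Bbar * Bbarᴴ * exp (-(t • S_rᴴ)) = 0)
    (A_r : Matrix (Fin r) (Fin r) ℂ) (C_r : Matrix (Fin p) (Fin r) ℂ)
    (hA_r : A_r = -(P_S * S_rᴴ * P_S⁻¹)) (hC_r : C_r = -(Bbarᴴ * P_S⁻¹))
    (hA_rHur : ∀ μ ∈ spectrum ℂ A_r, μ.re < 0)
    (W : Matrix (Fin n) (Fin r) ℂ)
    (hW : Wᴴ * A = S_r * Wᴴ + Bbar * C - exp (-(t • S_r)) * Bbar * C * exp (t • A))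
    (Qtilde : Matrix (Fin r) (Fin n) ℂ)
    (hQtilde : Qtilde = Matrix.of fun i j =>
      ∫ τ in (0:ℝ)..t, (exp (τ • A_rᴴ) * C_rᴴ * C * exp (τ • A)) i j) :
    (A_rᴴ * (P_S⁻¹ * Wᴴ) + (P_S⁻¹ * Wᴴ) * A + C_rᴴ * C
        - exp (t • A_rᴴ) * C_rᴴ * C * exp (t • A) = 0) ∧
      Qtilde = P_S⁻¹ * Wᴴ := by
  classical
  have hdet : IsUnit P_S.det := (Matrix.isUnit_iff_isUnit_det _).mp hPinv
  have hPP : P_S * P_S⁻¹ = 1 := Matrix.mul_nonsing_inv _ hdet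
  have hPP' : P_S⁻¹ * P_S = 1 := Matrix.nonsing_inv_mul _ hdet
  have hXH : (exp (-(t • S_r)))ᴴ = exp (-(t • S_rᴴ)) := by
    rw [show -(t • S_rᴴ) = (-(t • S_r))ᴴ from by
      simp [Matrix.conjTranspose_neg, Matrix.conjTranspose_smul]]
    rw [Matrix.exp_conjTranspose]
  have hYH : (exp (-(t • S_rᴴ)))ᴴ = exp (-(t • S_r)) := by
    rw [← hXH, Matrix.conjTranspose_conjTranspose]
  have key1 : S_r * P_S + P_S * S_rᴴ
      = Bbar * Bbarᴴ - exp (-(t • S_r)) * (Bbar * (Bbarᴴ * exp (-(t • S_rᴴ)))) := by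
    have h : (S_r * P_S + P_S * S_rᴴ)
        - (Bbar * Bbarᴴ - exp (-(t • S_r)) * (Bbar * (Bbarᴴ * exp (-(t • S_rᴴ)))))
        = -( -(S_r * P_S) - P_S * S_rᴴ + Bbar * Bbarᴴ
          - exp (-(t • S_r)) * Bbar * Bbarᴴ * exp (-(t • S_rᴴ))) := by
      rw [Matrix.mul_assoc, Matrix.mul_assoc]
      abel
    rw [hLyap, neg_zero] at h
    exact sub_eq_zero.mp h
  have key2 : P_Sᴴ * S_rᴴ + S_r * P_Sᴴ
      = Bbar * Bbarᴴ - exp (-(t • S_r)) * (Bbar * (Bbarᴴ * exp (-(t • S_rᴴ)))) := by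
    have h := congrArg Matrix.conjTranspose key1
    simp only [Matrix.conjTranspose_add, Matrix.conjTranspose_sub, Matrix.conjTranspose_mul,
      Matrix.conjTranspose_conjTranspose, hXH, hYH, Matrix.mul_assoc] at h
    simpa only [Matrix.mul_assoc] using h
  have hdisjS : ∀ μ ∈ spectrum ℂ S_r, ∀ ν ∈ spectrum ℂ S_rᴴ, μ + ν ≠ 0 := by
    intro μ hμ ν hν h0
    have h1 := hS μ hμ
    have h2 := hS _ (conj_mem_spectrum hν)
    rw [Complex.conj_re] at h2
    have h3 := congrArg Complex.re h0
    simp only [Complex.add_re, Complex.zero_re] at h3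
    linarith
  have hZ : S_r * (P_Sᴴ - P_S) + (P_Sᴴ - P_S) * S_rᴴ = 0 := by
    have h : S_r * (P_Sᴴ - P_S) + (P_Sᴴ - P_S) * S_rᴴ
        = (P_Sᴴ * S_rᴴ + S_r * P_Sᴴ) - (S_r * P_S + P_S * S_rᴴ) := by
      rw [Matrix.mul_sub, Matrix.sub_mul]; abel
    rw [h, key2, key1, sub_self]
  have hP : P_Sᴴ = P_S := sub_eq_zero.mp (sylvester_unique S_r S_rᴴ hdisjS _ hZ)
  have hPinvH : P_S⁻¹ᴴ = P_S⁻¹ := by rw [Matrix.conjTranspose_nonsing_inv, hP]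
  have hArH : A_rᴴ = -(P_S⁻¹ * (S_r * P_S)) := by
    rw [hA_r]
    simp only [Matrix.conjTranspose_neg, Matrix.conjTranspose_mul,
      Matrix.conjTranspose_conjTranspose, hPinvH, hP, Matrix.mul_assoc]
  have hCrH : C_rᴴ = -(P_S⁻¹ * Bbar) := by
    rw [hC_r]
    simp only [Matrix.conjTranspose_neg, Matrix.conjTranspose_mul,
      Matrix.conjTranspose_conjTranspose, hPinvH]
  have hexpArH : exp (t • A_rᴴ) = P_S⁻¹ * exp (-(t • S_r)) * P_S := by
    have h1 : t • A_rᴴ = P_S⁻¹ * (-(t • S_r)) * P_S := by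
      rw [hArH]
      simp only [smul_neg, Matrix.mul_neg, Matrix.neg_mul, Matrix.mul_smul, Matrix.smul_mul,
        Matrix.mul_assoc]
    rw [h1, Matrix.exp_conj' P_S (-(t • S_r)) hPinv]
  have hcanc : ∀ {c : ℕ} (X : Matrix (Fin r) (Fin c) ℂ), P_S * (P_S⁻¹ * X) = X := by
    intro c X; rw [← Matrix.mul_assoc, hPP, Matrix.one_mul]
  have goal1 : A_rᴴ * (P_S⁻¹ * Wᴴ) + (P_S⁻¹ * Wᴴ) * A + C_rᴴ * C
      - exp (t • A_rᴴ) * C_rᴴ * C * exp (t • A) = 0 := by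
    rw [Matrix.mul_assoc P_S⁻¹ Wᴴ A, hW, hexpArH, hArH, hCrH]
    simp only [Matrix.neg_mul, Matrix.mul_neg, neg_neg, Matrix.mul_add, Matrix.mul_sub,
      Matrix.mul_assoc, hcanc]
    abel
  refine ⟨goal1, ?_⟩
  have hQ2 : Qtilde = Matrix.of fun i j =>
      ∫ τ in (0:ℝ)..t, (exp (τ • A_rᴴ) * (C_rᴴ * C) * exp (τ • A)) i j := by
    rw [hQtilde]; simp only [Matrix.mul_assoc]
  have heq2 := qtilde_eq A_rᴴ (C_rᴴ * C) A t Qtilde hQ2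
  have goal1' : A_rᴴ * (P_S⁻¹ * Wᴴ) + (P_S⁻¹ * Wᴴ) * A + C_rᴴ * C
      - exp (t • A_rᴴ) * (C_rᴴ * C) * exp (t • A) = 0 := by
    simpa only [Matrix.mul_assoc] using goal1
  have hdisjA : ∀ μ ∈ spectrum ℂ A_rᴴ, ∀ ν ∈ spectrum ℂ A, μ + ν ≠ 0 := by
    intro μ hμ ν hν h0
    have h1 := hA_rHur _ (conj_mem_spectrum hμ)
    rw [Complex.conj_re] at h1
    have h2 := hA ν hν
    have h3 := congrArg Complex.re h0
    simp only [Complex.add_re, Complex.zero_re] at h3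
    linarith
  have hsub : A_rᴴ * (Qtilde - P_S⁻¹ * Wᴴ) + (Qtilde - P_S⁻¹ * Wᴴ) * A = 0 := by
    have h : A_rᴴ * (Qtilde - P_S⁻¹ * Wᴴ) + (Qtilde - P_S⁻¹ * Wᴴ) * A
        = (A_rᴴ * Qtilde + Qtilde * A + C_rᴴ * C
            - exp (t • A_rᴴ) * (C_rᴴ * C) * exp (t • A))
          - (A_rᴴ * (P_S⁻¹ * Wᴴ) + (P_S⁻¹ * Wᴴ) * A + C_rᴴ * C
            - exp (t • A_rᴴ) * (C_rᴴ * C) * exp (t • A)) := by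
      rw [Matrix.mul_sub, Matrix.sub_mul]; abel
    rw [h, heq2, goal1', sub_self]
  exact sub_eq_zero.mp (sylvester_unique A_rᴴ A hdisjA _ hsub)
end

section
/- Time-limited H₂ error as Gramian deficit: under the time-limited pseudo-optimality hypothesis C_r P̂_T = C P̃_T with P̃_T = V_t P̂_T and C_r = C V_t, the squared error satisfies ‖H − Ĥ_r‖²_{H₂,t} = tr( C (P_T − V_t P̂_T V_t*) C* ); in particular, since the left side is nonnegative, tr(C V_t P̂_T V_t* C*) ≤ tr(C P_T C*). -/
open Matrix MeasureTheory NormedSpace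

attribute [local instance] Matrix.linftyOpNormedRing Matrix.linftyOpNormedAlgebra

private lemma contExpChain {a b c : ℕ} (A : Matrix (Fin a) (Fin a) ℂ)
    (B : Matrix (Fin a) (Fin b) ℂ) (B' : Matrix (Fin c) (Fin b) ℂ)
    (D : Matrix (Fin c) (Fin c) ℂ) :
    Continuous fun τ : ℝ => NormedSpace.exp (τ • A) * B * B'ᴴ * NormedSpace.exp (τ • D) := by
  have h1 : Continuous fun τ : ℝ => NormedSpace.exp (τ • A) :=
    exp_continuous.comp (continuous_id.smul continuous_const)
  have h2 : Continuous fun τ : ℝ => NormedSpace.exp (τ • D) :=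
    exp_continuous.comp (continuous_id.smul continuous_const)
  exact ((h1.matrix_mul continuous_const).matrix_mul continuous_const).matrix_mul h2

private lemma trace_mul_integral_mul {a b d : ℕ} (t : ℝ)
    (L : Matrix (Fin d) (Fin a) ℂ) (R : Matrix (Fin b) (Fin d) ℂ)
    (f : ℝ → Matrix (Fin a) (Fin b) ℂ) (hf : ∀ i j, Continuous fun τ => f τ i j) :
    Matrix.trace (L * (Matrix.of fun i j => ∫ τ in (0:ℝ)..t, f τ i j) * R)
      = ∫ τ in (0:ℝ)..t, Matrix.trace (L * f τ * R) := by
  simp only [Matrix.trace, Matrix.diag, Matrix.mul_apply, Matrix.of_apply, Finset.sum_mul]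
  rw [intervalIntegral.integral_finset_sum (fun k _ => ?_)]
  · refine Finset.sum_congr rfl fun k _ => ?_
    rw [intervalIntegral.integral_finset_sum (fun j _ => ?_)]
    · refine Finset.sum_congr rfl fun j _ => ?_
      rw [intervalIntegral.integral_finset_sum (fun i _ => ?_)]
      · refine Finset.sum_congr rfl fun i _ => ?_
        rw [intervalIntegral.integral_mul_const, intervalIntegral.integral_const_mul]
      · exact (((continuous_const.mul (hf i j)).mul continuous_const).intervalIntegrable _ _)
    · exact (Continuous.intervalIntegrable (by
        exact (continuous_finset_sum _ fun i _ => (continuous_const.mul (hf i j)).mul continuous_const)) _ _)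
  · exact (Continuous.intervalIntegrable (by
      exact continuous_finset_sum _ fun j _ =>
        continuous_finset_sum _ fun i _ => (continuous_const.mul (hf i j)).mul continuous_const) _ _)

private lemma intervalIntegral_conj {f : ℝ → ℂ} {a b : ℝ} :
    ∫ x in a..b, (starRingEnd ℂ) (f x) = (starRingEnd ℂ) (∫ x in a..b, f x) := by
  simp [intervalIntegral, integral_conj, map_sub]


/-- Under time-limited pseudo-optimality `C_r P̂_T = C P̃_T` with
`P̃_T = V_t P̂_T` and `C_r = C V_t`, the squared error equals
`tr(C (P_T − V_t P̂_T V_tᴴ) Cᴴ)`, and `tr(C V_t P̂_T V_tᴴ Cᴴ) ≤ tr(C P_T Cᴴ)`. -/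
theorem timeLimited_error_as_gramian_deficit
    (n r m p : ℕ) (A : Matrix (Fin n) (Fin n) ℂ) (A_r : Matrix (Fin r) (Fin r) ℂ)
    (B : Matrix (Fin n) (Fin m) ℂ) (B_r : Matrix (Fin r) (Fin m) ℂ)
    (C : Matrix (Fin p) (Fin n) ℂ) (C_r : Matrix (Fin p) (Fin r) ℂ)
    (hA : ∀ μ ∈ spectrum ℂ A, μ.re < 0)
    (hA_r : ∀ μ ∈ spectrum ℂ A_r, μ.re < 0)
    (t : ℝ) (ht : 0 < t)
    (P_T : Matrix (Fin n) (Fin n) ℂ) (Phat : Matrix (Fin r) (Fin r) ℂ)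
    (Ptilde : Matrix (Fin n) (Fin r) ℂ)
    (hP : P_T = Matrix.of fun i j =>
      ∫ τ in (0:ℝ)..t, (NormedSpace.exp (τ • A) * B * Bᴴ * NormedSpace.exp (τ • Aᴴ)) i j)
    (hPhat : Phat = Matrix.of fun i j =>
      ∫ τ in (0:ℝ)..t, (NormedSpace.exp (τ • A_r) * B_r * B_rᴴ * NormedSpace.exp (τ • A_rᴴ)) i j)
    (hPtilde : Ptilde = Matrix.of fun i j =>
      ∫ τ in (0:ℝ)..t, (NormedSpace.exp (τ • A) * B * B_rᴴ * NormedSpace.exp (τ • A_rᴴ)) i j)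
    (V_t : Matrix (Fin n) (Fin r) ℂ)
    (hPtildeVt : Ptilde = V_t * Phat)
    (hC_r : C_r = C * V_t)
    (hOpt : C_r * Phat = C * Ptilde) :
    ((Matrix.trace (C * P_T * Cᴴ)).re - 2 * (Matrix.trace (C * Ptilde * C_rᴴ)).re
        + (Matrix.trace (C_r * Phat * C_rᴴ)).re
      = (Matrix.trace (C * (P_T - V_t * Phat * V_tᴴ) * Cᴴ)).re) ∧
      (Matrix.trace (C * V_t * Phat * V_tᴴ * Cᴴ)).re ≤ (Matrix.trace (C * P_T * Cᴴ)).re := by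
  -- shorthand traces
  set T1 := Matrix.trace (C * P_T * Cᴴ) with hT1def
  set T2 := Matrix.trace (C * Ptilde * C_rᴴ) with hT2def
  set T3 := Matrix.trace (C_r * Phat * C_rᴴ) with hT3def
  -- T3 = T2
  have h32 : T3 = T2 := by
    rw [hT3def, hT2def, hOpt]
  -- C * (V_t * Phat * V_tᴴ) * Cᴴ has trace T2
  have hVP : Matrix.trace (C * (V_t * Phat * V_tᴴ) * Cᴴ) = T2 := by
    rw [hT2def, hPtildeVt, hC_r]
    simp [Matrix.conjTranspose_mul, Matrix.mul_assoc]
  constructor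
  · rw [Matrix.mul_sub, Matrix.sub_mul, Matrix.trace_sub, Complex.sub_re, hVP, h32]
    ring
  · -- the analytic part
    have hE : ∀ (k : ℕ) (M : Matrix (Fin k) (Fin k) ℂ) (τ : ℝ),
        (NormedSpace.exp (τ • M))ᴴ = NormedSpace.exp (τ • Mᴴ) := by
      intro k M τ
      rw [← Matrix.exp_conjTranspose, Matrix.conjTranspose_smul, star_trivial]
    -- error system output difference
    set F : ℝ → Matrix (Fin p) (Fin m) ℂ :=
      fun τ => C * NormedSpace.exp (τ • A) * B - C_r * NormedSpace.exp (τ • A_r) * B_r with hFdef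
    -- pointwise expansion of trace (F * Fᴴ)
    have hpt : ∀ τ : ℝ, Matrix.trace (F τ * (F τ)ᴴ)
        = Matrix.trace (C * (NormedSpace.exp (τ • A) * B * Bᴴ * NormedSpace.exp (τ • Aᴴ)) * Cᴴ)
          - Matrix.trace (C * (NormedSpace.exp (τ • A) * B * B_rᴴ * NormedSpace.exp (τ • A_rᴴ)) * C_rᴴ)
          - (starRingEnd ℂ)
              (Matrix.trace (C * (NormedSpace.exp (τ • A) * B * B_rᴴ * NormedSpace.exp (τ • A_rᴴ)) * C_rᴴ))
          + Matrix.trace (C_r * (NormedSpace.exp (τ • A_r) * B_r * B_rᴴ * NormedSpace.exp (τ • A_rᴴ)) * C_rᴴ) := by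
      intro τ
      have hexpand : F τ * (F τ)ᴴ
          = C * (NormedSpace.exp (τ • A) * B * Bᴴ * NormedSpace.exp (τ • Aᴴ)) * Cᴴ
            - C * (NormedSpace.exp (τ • A) * B * B_rᴴ * NormedSpace.exp (τ • A_rᴴ)) * C_rᴴ
            - (C * (NormedSpace.exp (τ • A) * B * B_rᴴ * NormedSpace.exp (τ • A_rᴴ)) * C_rᴴ)ᴴ
            + C_r * (NormedSpace.exp (τ • A_r) * B_r * B_rᴴ * NormedSpace.exp (τ • A_rᴴ)) * C_rᴴ := by
        rw [hFdef]
        simp only [Matrix.conjTranspose_sub, Matrix.conjTranspose_mul, Matrix.sub_mul,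
          Matrix.mul_sub, Matrix.conjTranspose_conjTranspose, hE, Matrix.mul_assoc]
        abel
      rw [hexpand, Matrix.trace_add, Matrix.trace_sub, Matrix.trace_sub,
        Matrix.trace_conjTranspose]
      rfl
    -- continuity of entries
    have hc1 := contExpChain A B B Aᴴ
    have hc2 := contExpChain A B B_r A_rᴴ
    have hc3 := contExpChain A_r B_r B_r A_rᴴ
    -- trace-integral identities
    have hI1 : T1 = ∫ τ in (0:ℝ)..t,
        Matrix.trace (C * (NormedSpace.exp (τ • A) * B * Bᴴ * NormedSpace.exp (τ • Aᴴ)) * Cᴴ) := by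
      rw [hT1def, hP]
      exact trace_mul_integral_mul t C Cᴴ _ (fun i j => hc1.matrix_elem i j)
    have hI2 : T2 = ∫ τ in (0:ℝ)..t,
        Matrix.trace (C * (NormedSpace.exp (τ • A) * B * B_rᴴ * NormedSpace.exp (τ • A_rᴴ)) * C_rᴴ) := by
      rw [hT2def, hPtilde]
      exact trace_mul_integral_mul t C C_rᴴ _ (fun i j => hc2.matrix_elem i j)
    have hI3 : T3 = ∫ τ in (0:ℝ)..t,
        Matrix.trace (C_r * (NormedSpace.exp (τ • A_r) * B_r * B_rᴴ * NormedSpace.exp (τ • A_rᴴ)) * C_rᴴ) := by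
      rw [hT3def, hPhat]
      exact trace_mul_integral_mul t C_r C_rᴴ _ (fun i j => hc3.matrix_elem i j)
    -- continuity of the trace integrands
    have htc1 : Continuous fun τ : ℝ =>
        Matrix.trace (C * (NormedSpace.exp (τ • A) * B * Bᴴ * NormedSpace.exp (τ • Aᴴ)) * Cᴴ) :=
      ((continuous_const.matrix_mul hc1).matrix_mul continuous_const).matrix_trace
    have htc2 : Continuous fun τ : ℝ =>
        Matrix.trace (C * (NormedSpace.exp (τ • A) * B * B_rᴴ * NormedSpace.exp (τ • A_rᴴ)) * C_rᴴ) :=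
      ((continuous_const.matrix_mul hc2).matrix_mul continuous_const).matrix_trace
    have htc3 : Continuous fun τ : ℝ =>
        Matrix.trace (C_r * (NormedSpace.exp (τ • A_r) * B_r * B_rᴴ * NormedSpace.exp (τ • A_rᴴ)) * C_rᴴ) :=
      ((continuous_const.matrix_mul hc3).matrix_mul continuous_const).matrix_trace
    -- the key integral identity
    have int1 : IntervalIntegrable (fun τ : ℝ =>
        Matrix.trace (C * (NormedSpace.exp (τ • A) * B * Bᴴ * NormedSpace.exp (τ • Aᴴ)) * Cᴴ)) volume 0 t :=
      htc1.intervalIntegrable 0 t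
    have int2 : IntervalIntegrable (fun τ : ℝ =>
        Matrix.trace (C * (NormedSpace.exp (τ • A) * B * B_rᴴ * NormedSpace.exp (τ • A_rᴴ)) * C_rᴴ)) volume 0 t :=
      htc2.intervalIntegrable 0 t
    have intc2 : IntervalIntegrable (fun τ : ℝ => (starRingEnd ℂ)
        (Matrix.trace (C * (NormedSpace.exp (τ • A) * B * B_rᴴ * NormedSpace.exp (τ • A_rᴴ)) * C_rᴴ))) volume 0 t :=
      (Complex.continuous_conj.comp htc2).intervalIntegrable 0 t
    have int3 : IntervalIntegrable (fun τ : ℝ =>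
        Matrix.trace (C_r * (NormedSpace.exp (τ • A_r) * B_r * B_rᴴ * NormedSpace.exp (τ • A_rᴴ)) * C_rᴴ)) volume 0 t :=
      htc3.intervalIntegrable 0 t
    have hkey : (∫ τ in (0:ℝ)..t, Matrix.trace (F τ * (F τ)ᴴ))
        = T1 - T2 - (starRingEnd ℂ) T2 + T3 := by
      calc (∫ τ in (0:ℝ)..t, Matrix.trace (F τ * (F τ)ᴴ))
          = ∫ τ in (0:ℝ)..t,
            (Matrix.trace (C * (NormedSpace.exp (τ • A) * B * Bᴴ * NormedSpace.exp (τ • Aᴴ)) * Cᴴ)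
              - Matrix.trace (C * (NormedSpace.exp (τ • A) * B * B_rᴴ * NormedSpace.exp (τ • A_rᴴ)) * C_rᴴ)
              - (starRingEnd ℂ)
                  (Matrix.trace (C * (NormedSpace.exp (τ • A) * B * B_rᴴ * NormedSpace.exp (τ • A_rᴴ)) * C_rᴴ))
              + Matrix.trace (C_r * (NormedSpace.exp (τ • A_r) * B_r * B_rᴴ * NormedSpace.exp (τ • A_rᴴ)) * C_rᴴ)) :=
            intervalIntegral.integral_congr fun τ _ => hpt τ
        _ = (∫ τ in (0:ℝ)..t,
            (Matrix.trace (C * (NormedSpace.exp (τ • A) * B * Bᴴ * NormedSpace.exp (τ • Aᴴ)) * Cᴴ)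
              - Matrix.trace (C * (NormedSpace.exp (τ • A) * B * B_rᴴ * NormedSpace.exp (τ • A_rᴴ)) * C_rᴴ)
              - (starRingEnd ℂ)
                  (Matrix.trace (C * (NormedSpace.exp (τ • A) * B * B_rᴴ * NormedSpace.exp (τ • A_rᴴ)) * C_rᴴ))))
            + ∫ τ in (0:ℝ)..t,
              Matrix.trace (C_r * (NormedSpace.exp (τ • A_r) * B_r * B_rᴴ * NormedSpace.exp (τ • A_rᴴ)) * C_rᴴ) :=
            intervalIntegral.integral_add ((int1.sub int2).sub intc2) int3
        _ = ((∫ τ in (0:ℝ)..t,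
            (Matrix.trace (C * (NormedSpace.exp (τ • A) * B * Bᴴ * NormedSpace.exp (τ • Aᴴ)) * Cᴴ)
              - Matrix.trace (C * (NormedSpace.exp (τ • A) * B * B_rᴴ * NormedSpace.exp (τ • A_rᴴ)) * C_rᴴ)))
            - ∫ τ in (0:ℝ)..t, (starRingEnd ℂ)
                (Matrix.trace (C * (NormedSpace.exp (τ • A) * B * B_rᴴ * NormedSpace.exp (τ • A_rᴴ)) * C_rᴴ)))
            + ∫ τ in (0:ℝ)..t,
              Matrix.trace (C_r * (NormedSpace.exp (τ • A_r) * B_r * B_rᴴ * NormedSpace.exp (τ • A_rᴴ)) * C_rᴴ) := by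
            rw [intervalIntegral.integral_sub (int1.sub int2) intc2]
        _ = T1 - T2 - (starRingEnd ℂ) T2 + T3 := by
            rw [intervalIntegral.integral_sub int1 int2, intervalIntegral_conj,
              ← hI1, ← hI2, ← hI3]
    -- nonnegativity
    have hFcont : Continuous fun τ : ℝ => Matrix.trace (F τ * (F τ)ᴴ) := by
      have hcF : Continuous F := by
        rw [hFdef]
        have h1 : Continuous fun τ : ℝ => NormedSpace.exp (τ • A) :=
          exp_continuous.comp (continuous_id.smul continuous_const)
        have h2 : Continuous fun τ : ℝ => NormedSpace.exp (τ • A_r) :=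
          exp_continuous.comp (continuous_id.smul continuous_const)
        exact (((continuous_const.matrix_mul h1).matrix_mul continuous_const).sub
          ((continuous_const.matrix_mul h2).matrix_mul continuous_const))
      exact (hcF.matrix_mul hcF.matrix_conjTranspose).matrix_trace
    have hre : ((∫ τ in (0:ℝ)..t, Matrix.trace (F τ * (F τ)ᴴ))).re
        = ∫ τ in (0:ℝ)..t, (Matrix.trace (F τ * (F τ)ᴴ)).re :=
      (ContinuousLinearMap.intervalIntegral_comp_comm Complex.reCLM
        (hFcont.intervalIntegrable _ _)).symm
    have hnn : 0 ≤ ((∫ τ in (0:ℝ)..t, Matrix.trace (F τ * (F τ)ᴴ))).re := by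
      rw [hre]
      refine intervalIntegral.integral_nonneg ht.le fun τ _ => ?_
      simp only [Matrix.trace, Matrix.diag, Matrix.mul_apply, Matrix.conjTranspose_apply,
        Complex.re_sum]
      refine Finset.sum_nonneg fun i _ => Finset.sum_nonneg fun j _ => ?_
      rw [show star (F τ i j) = (starRingEnd ℂ) (F τ i j) from rfl, Complex.mul_conj]
      simp [Complex.normSq_nonneg]
    -- conclude
    have : 0 ≤ T1.re - T2.re - T2.re + T3.re := by
      have := hnn
      rw [hkey] at this
      simpa [Complex.sub_re, Complex.add_re, Complex.conj_re] using this
    have hgoal : Matrix.trace (C * V_t * Phat * V_tᴴ * Cᴴ) = T2 := by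
      rw [← hVP]
      simp [Matrix.mul_assoc]
    rw [hgoal]
    have h32' : T3.re = T2.re := by rw [h32]
    linarith [this, h32'.le, h32'.ge]
end
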